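/- arXiv:1406.3152 — 6 statements merged into one kernel-verified Lean document; each statement's English description precedes it below -/
import Mathlib

section
/- Let A be an abelian ℓ-group. Then A is Archimedean if and only if the bands of A coincide with the polars of A; since every polar of A is a band, this says: A is Archimedean if and only if every band I of A satisfies I = I^⊥⊥ (i.e., every band is a polar). -/
/-- The absolute value `|g| = (g ⊔ 0) + ((-g) ⊔ 0)` in a lattice-ordered abelian group. -/
def absl {A : Type*} [Lattice A] [AddCommGroup A] (g : A) : A :=
  (g ⊔ 0) + (-g ⊔ 0)

/-- The polar `T^⊥ = {x : |x| ⊓ |t| = 0 for all t ∈ T}`. -/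
def polar {A : Type*} [Lattice A] [AddCommGroup A] (T : Set A) : Set A :=
  {x : A | ∀ t ∈ T, absl x ⊓ absl t = 0}

/-- An ideal of an abelian ℓ-group: an order-convex sublattice subgroup. -/
structure IsIdeal {A : Type*} [Lattice A] [AddCommGroup A] (I : Set A) : Prop where
  zero_mem : (0 : A) ∈ I
  add_mem : ∀ ⦃a b : A⦄, a ∈ I → b ∈ I → a + b ∈ I
  neg_mem : ∀ ⦃a : A⦄, a ∈ I → -a ∈ I
  sup_mem : ∀ ⦃a b : A⦄, a ∈ I → b ∈ I → a ⊔ b ∈ I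
  inf_mem : ∀ ⦃a b : A⦄, a ∈ I → b ∈ I → a ⊓ b ∈ I
  convex : ∀ ⦃a b c : A⦄, a ∈ I → c ∈ I → a ≤ b → b ≤ c → b ∈ I

/-- A band: an ideal closed under all suprema that exist in `A`. -/
structure IsBand {A : Type*} [Lattice A] [AddCommGroup A] (I : Set A) : Prop where
  ideal : IsIdeal I
  sup_closed : ∀ S : Set A, S ⊆ I → ∀ a : A, IsLUB S a → a ∈ I

/-- `A` is Archimedean: whenever `0 ≤ n • g ≤ h` for all integers `n ≥ 1`, then `g = 0`. -/
def IsArch (A : Type*) [Lattice A] [AddCommGroup A] : Prop :=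
  ∀ g h : A, (∀ n : ℕ, 1 ≤ n → 0 ≤ n • g ∧ n • g ≤ h) → g = 0

section Aux

variable {A : Type*} [Lattice A] [AddCommGroup A] [CovariantClass A A (· + ·) (· ≤ ·)]

lemma absl_eq (a : A) : absl a = |a| := posPart_add_negPart a

lemma mem_polar_iff {T : Set A} {x : A} : x ∈ polar T ↔ ∀ t ∈ T, |x| ⊓ |t| = 0 := by
  simp only [polar, Set.mem_setOf_eq, absl_eq]

lemma labs_le {x y : A} (h1 : x ≤ y) (h2 : -x ≤ y) : |x| ≤ y := sup_le h1 h2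

lemma labs_eq_zero {x : A} (h : |x| = 0) : x = 0 :=
  le_antisymm (h ▸ le_abs_self x) (neg_nonpos.1 (h ▸ neg_le_abs x))

lemma zero_mem_polar (T : Set A) : (0 : A) ∈ polar T := by
  intro t ht
  rw [absl_eq, absl_eq, abs_zero]
  exact inf_eq_left.2 (abs_nonneg t)

/-- meets distribute over existing suprema in an ℓ-group -/
lemma isLUB_inf {S : Set A} {s : A} (h : IsLUB S s) (a : A) :
    IsLUB {y | ∃ x ∈ S, y = a ⊓ x} (a ⊓ s) := by
  constructor
  · rintro y ⟨x, hx, rfl⟩; exact inf_le_inf_left a (h.1 hx)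
  · intro b hb
    have h1 : ∀ x ∈ S, x ≤ b + (a ⊔ s) - a := by
      intro x hx
      rw [le_sub_iff_add_le, add_comm x a, ← inf_add_sup a x]
      exact add_le_add (hb ⟨x, hx, rfl⟩) (sup_le_sup_left (h.1 hx) a)
    have h5 : s ≤ b + (a ⊔ s) - a := h.2 h1
    have h6 : a ⊓ s + (a ⊔ s) ≤ b + (a ⊔ s) := by
      rw [inf_add_sup]
      calc a + s ≤ a + (b + (a ⊔ s) - a) := add_le_add_right h5 a
        _ = b + (a ⊔ s) := by abel
    exact (add_le_add_iff_right (a ⊔ s)).1 h6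

/-- translates of existing suprema -/
lemma isLUB_shift {S : Set A} {s : A} (h : IsLUB S s) (t : A) :
    IsLUB {y | ∃ x ∈ S, y = x + t} (s + t) := by
  constructor
  · rintro y ⟨x, hx, rfl⟩; exact add_le_add_left (h.1 hx) t
  · intro b hb
    have h1 : s ≤ b - t := h.2 (fun x hx => le_sub_iff_add_le.2 (hb ⟨x, hx, rfl⟩))
    calc s + t ≤ (b - t) + t := add_le_add_left h1 t
      _ = b := sub_add_cancel b t

lemma inf_superadd {x y c : A} (hx : 0 ≤ x) (hy : 0 ≤ y) (hc : 0 ≤ c) :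
    (x + y) ⊓ c ≤ x ⊓ c + y ⊓ c := by
  rw [add_inf y c (x ⊓ c), inf_add x c y, inf_add x c c]
  refine le_inf (le_inf inf_le_left ?_) (le_inf ?_ ?_)
  · exact inf_le_right.trans (le_add_of_nonneg_right hy)
  · exact inf_le_right.trans (le_add_of_nonneg_left hx)
  · exact inf_le_right.trans (le_add_of_nonneg_right hc)

end Aux
section Dir1

variable {A : Type*} [Lattice A] [AddCommGroup A] [CovariantClass A A (· + ·) (· ≤ ·)]

lemma abs_mem_ideal {I : Set A} (hI : IsIdeal I) {t : A} (ht : t ∈ I) : |t| ∈ I := by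
  have : t ⊔ -t ∈ I := hI.sup_mem ht (hI.neg_mem ht)
  exact this

lemma polar_solid {T : Set A} {x y : A} (h : |y| ≤ |x|) (hx : x ∈ polar T) : y ∈ polar T := by
  rw [mem_polar_iff] at hx ⊢
  intro t ht
  refine le_antisymm ?_ (le_inf (abs_nonneg y) (abs_nonneg t))
  calc |y| ⊓ |t| ≤ |x| ⊓ |t| := inf_le_inf_right _ h
    _ = 0 := hx t ht

lemma nonneg_bipolar_mem (arch : IsArch A) {I : Set A} (hI : IsBand I)
    {u : A} (hu : 0 ≤ u) (hmem : u ∈ polar (polar I)) : u ∈ I := by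
  rw [mem_polar_iff] at hmem
  set S : Set A := {v | v ∈ I ∧ 0 ≤ v ∧ v ≤ u} with hS
  have hSI : S ⊆ I := fun v hv => hv.1
  refine hI.sup_closed S hSI u ⟨fun v hv => hv.2.2, ?_⟩
  intro b hb
  have hb0 : 0 ≤ b := hb ⟨hI.ideal.zero_mem, le_rfl, hu⟩
  set w : A := b ⊓ u with hw
  have hwu : w ≤ u := inf_le_right
  set d : A := u - w with hd
  have hd0 : 0 ≤ d := sub_nonneg.2 hwu
  have hdu : d ≤ u := sub_le_self u (le_inf hb0 hu)
  -- key : d is disjoint from every nonneg element of I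
  have key : ∀ i ∈ I, 0 ≤ i → d ⊓ i = 0 := by
    intro i hiI hi0
    set e : A := d ⊓ i with he
    have he0 : 0 ≤ e := le_inf hd0 hi0
    have heI : e ∈ I := hI.ideal.convex hI.ideal.zero_mem hiI he0 inf_le_right
    have hnI : ∀ n : ℕ, n • e ∈ I := by
      intro n
      induction n with
      | zero => simpa using hI.ideal.zero_mem
      | succ n ih => rw [succ_nsmul]; exact hI.ideal.add_mem ih heI
    have hne : ∀ n : ℕ, n • e ≤ u := by
      intro n
      induction n with
      | zero => simpa using hu
      | succ n ih =>
        have hmemS : n • e ∈ S := ⟨hnI n, nsmul_nonneg he0 n, ih⟩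
        have h1 : n • e ≤ w := le_inf (hb hmemS) ih
        calc (n+1) • e = n • e + e := succ_nsmul e n
          _ ≤ w + d := add_le_add h1 inf_le_left
          _ = u := by rw [hd]; abel
    exact arch e u (fun n _ => ⟨nsmul_nonneg he0 n, hne n⟩)
  have hdP : d ∈ polar I := by
    rw [mem_polar_iff]
    intro t ht
    rw [abs_of_nonneg hd0]
    exact key |t| (abs_mem_ideal hI.ideal ht) (abs_nonneg t)
  have hdd : d = 0 := by
    have h2 : |d| ⊓ |d| = 0 := by
      refine le_antisymm ?_ (le_inf (abs_nonneg d) (abs_nonneg d))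
      calc |d| ⊓ |d| ≤ |u| ⊓ |d| := by
            refine inf_le_inf_right _ ?_
            rw [abs_of_nonneg hd0, abs_of_nonneg hu]; exact hdu
        _ = 0 := hmem d hdP
    rw [inf_idem] at h2
    exact labs_eq_zero h2
  have huw : u = w := by rw [hd] at hdd; exact sub_eq_zero.1 hdd
  calc u = w := huw
    _ ≤ b := inf_le_left

end Dir1
section Dir2

variable {A : Type*} [Lattice A] [AddCommGroup A] [CovariantClass A A (· + ·) (· ≤ ·)]

/-- The positive cone of the ideal generated by `g⊥ ∪ {g}`. -/
def Pset (g : A) : Set A :=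
  {c | 0 ≤ c ∧ ∃ (c₀ : A) (n : ℕ), c₀ ∈ polar {g} ∧ 0 ≤ c₀ ∧ c ≤ c₀ + n • g}

/-- The band closure of the ideal generated by `g⊥ ∪ {g}`:
all `x` such that `|x| = sup { |x| ⊓ c : c ∈ Pset g }`. -/
def Eset (g : A) : Set A :=
  {x | ∀ b, (∀ c ∈ Pset g, |x| ⊓ c ≤ b) → |x| ≤ b}

lemma Eset_isLUB {g x : A} (hx : x ∈ Eset g) :
    IsLUB {w | ∃ c ∈ Pset g, w = |x| ⊓ c} |x| := by
  constructor
  · rintro w ⟨c, hc, rfl⟩; exact inf_le_left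
  · exact fun b hb => hx b fun c hc => hb ⟨c, hc, rfl⟩

lemma Eset_solid {g x y : A} (h : |y| ≤ |x|) (hx : x ∈ Eset g) : y ∈ Eset g := by
  intro b hb
  have l1 := isLUB_inf (Eset_isLUB hx) |y|
  have h2 : |y| ⊓ |x| ≤ b := by
    refine l1.2 ?_
    rintro w ⟨z, ⟨c, hc, rfl⟩, rfl⟩
    have h3 : |y| ⊓ (|x| ⊓ c) = |y| ⊓ c := by rw [← inf_assoc, inf_eq_left.2 h]
    rw [h3]; exact hb c hc
  rwa [inf_eq_left.2 h] at h2

lemma Pset_add {g : A} (hg : 0 ≤ g) {c c' : A} (hc : c ∈ Pset g) (hc' : c' ∈ Pset g) :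
    c + c' ∈ Pset g := by
  obtain ⟨hc0, c₀, n, hc₀, hc₀0, hle⟩ := hc
  obtain ⟨hc'0, c₀', m, hc₀', hc₀'0, hle'⟩ := hc'
  refine ⟨add_nonneg hc0 hc'0, c₀ + c₀', n + m, ?_, add_nonneg hc₀0 hc₀'0, ?_⟩
  · rw [mem_polar_iff]
    intro t ht
    simp only [Set.mem_singleton_iff] at ht
    rw [ht]
    have h1 : |c₀| ⊓ |g| = 0 := mem_polar_iff.1 hc₀ g rfl
    have h2 : |c₀'| ⊓ |g| = 0 := mem_polar_iff.1 hc₀' g rfl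
    rw [abs_of_nonneg hc₀0] at h1
    rw [abs_of_nonneg hc₀'0] at h2
    rw [abs_of_nonneg (add_nonneg hc₀0 hc₀'0)]
    refine le_antisymm ?_ (le_inf (add_nonneg hc₀0 hc₀'0) (abs_nonneg g))
    calc (c₀ + c₀') ⊓ |g| ≤ c₀ ⊓ |g| + c₀' ⊓ |g| :=
          inf_superadd hc₀0 hc₀'0 (abs_nonneg g)
      _ = 0 := by rw [h1, h2, add_zero]
  · calc c + c' ≤ (c₀ + n • g) + (c₀' + m • g) := add_le_add hle hle'
      _ = (c₀ + c₀') + (n + m) • g := by rw [add_nsmul]; abel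

lemma Eset_zero (g : A) : (0 : A) ∈ Eset g := by
  intro b hb
  have h0 : (0 : A) ∈ Pset g := ⟨le_rfl, 0, 0, zero_mem_polar _, le_rfl, by simp⟩
  have := hb 0 h0
  simpa using this

lemma Eset_add {g : A} (hg : 0 ≤ g) {x y : A} (hx : x ∈ Eset g) (hy : y ∈ Eset g) :
    x + y ∈ Eset g := by
  intro b hb
  have stepA : ∀ c' ∈ Pset g, |x + y| ⊓ (|x| + |y| ⊓ c') ≤ b := by
    intro c' hc'
    have l1 := isLUB_shift (Eset_isLUB hx) (|y| ⊓ c')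
    have l2 := isLUB_inf l1 |x + y|
    refine l2.2 ?_
    rintro w ⟨z, ⟨z', ⟨c, hc, rfl⟩, rfl⟩, rfl⟩
    calc |x + y| ⊓ (|x| ⊓ c + |y| ⊓ c') ≤ |x + y| ⊓ (c + c') :=
          inf_le_inf_left _ (add_le_add inf_le_right inf_le_right)
      _ ≤ b := hb (c + c') (Pset_add hg hc hc')
  have stepB : |x + y| ⊓ (|y| + |x|) ≤ b := by
    have l1 := isLUB_shift (Eset_isLUB hy) |x|
    have l2 := isLUB_inf l1 |x + y|
    refine l2.2 ?_
    rintro w ⟨z, ⟨z', ⟨c', hc', rfl⟩, rfl⟩, rfl⟩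
    have := stepA c' hc'
    rwa [add_comm (|x|) (|y| ⊓ c')] at this
  have h3 : |x + y| ≤ |y| + |x| := (abs_add_le x y).trans_eq (add_comm _ _)
  rwa [inf_eq_left.2 h3] at stepB

lemma Eset_ideal {g : A} (hg : 0 ≤ g) : IsIdeal (Eset g) := by
  have solid := fun {x y : A} (h : |y| ≤ |x|) (hx : x ∈ Eset g) => Eset_solid h hx
  have habs : ∀ {a : A}, a ∈ Eset g → |a| ∈ Eset g := by
    intro a ha; exact solid (le_of_eq (abs_abs a)) ha
  have hpair : ∀ {a c x : A}, a ∈ Eset g → c ∈ Eset g → x ≤ |a| + |c| → -x ≤ |a| + |c| →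
      x ∈ Eset g := by
    intro a c x ha hc h1 h2
    have hsum : |a| + |c| ∈ Eset g := Eset_add hg (habs ha) (habs hc)
    refine solid ?_ hsum
    rw [abs_of_nonneg (add_nonneg (abs_nonneg a) (abs_nonneg c))]
    exact labs_le h1 h2
  refine ⟨Eset_zero g, fun a b ha hb => Eset_add hg ha hb, ?_, ?_, ?_, ?_⟩
  · intro a ha
    exact solid (le_of_eq (abs_neg a)) ha
  · intro a c ha hc
    refine hpair ha hc ?_ ?_
    · exact sup_le ((le_abs_self a).trans (le_add_of_nonneg_right (abs_nonneg c)))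
        ((le_abs_self c).trans (le_add_of_nonneg_left (abs_nonneg a)))
    · rw [neg_sup]
      exact inf_le_left.trans ((neg_le_abs a).trans (le_add_of_nonneg_right (abs_nonneg c)))
  · intro a c ha hc
    refine hpair ha hc ?_ ?_
    · exact inf_le_left.trans ((le_abs_self a).trans (le_add_of_nonneg_right (abs_nonneg c)))
    · rw [neg_inf]
      exact sup_le ((neg_le_abs a).trans (le_add_of_nonneg_right (abs_nonneg c)))
        ((neg_le_abs c).trans (le_add_of_nonneg_left (abs_nonneg a)))
  · intro a x c ha hc h1 h2
    refine hpair ha hc ?_ ?_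
    · exact h2.trans ((le_abs_self c).trans (le_add_of_nonneg_left (abs_nonneg a)))
    · exact (neg_le_neg_iff.2 h1).trans ((neg_le_abs a).trans (le_add_of_nonneg_right (abs_nonneg c)))

lemma Eset_band {g : A} (hg : 0 ≤ g) : IsBand (Eset g) := by
  refine ⟨Eset_ideal hg, ?_⟩
  intro S hS a ha
  rcases S.eq_empty_or_nonempty with rfl | ⟨s₀, hs₀⟩
  · have hleast : ∀ x : A, a ≤ x := by
      intro x
      exact ha.2 (fun y hy => absurd hy (Set.notMem_empty y))
    have h1 : a ≤ 0 := hleast 0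
    have h2 : 0 ≤ a := (le_add_iff_nonneg_right a).1 (hleast (a + a))
    rw [le_antisymm h1 h2]
    exact Eset_zero g
  · have hs₀a : s₀ ≤ a := ha.1 hs₀
    set S' : Set A := {y | ∃ s ∈ S, y = (s ⊔ s₀) - s₀} with hS'
    have hS'E : ∀ y ∈ S', y ∈ Eset g := by
      rintro y ⟨s, hs, rfl⟩
      have h1 : s ⊔ s₀ ∈ Eset g := (Eset_ideal hg).sup_mem (hS hs) (hS hs₀)
      have h2 : (s ⊔ s₀) + -s₀ ∈ Eset g :=
        (Eset_ideal hg).add_mem h1 ((Eset_ideal hg).neg_mem (hS hs₀))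
      rwa [← sub_eq_add_neg] at h2
    have hS'0 : ∀ y ∈ S', 0 ≤ y := by
      rintro y ⟨s, hs, rfl⟩
      exact sub_nonneg.2 le_sup_right
    have hlub' : IsLUB S' (a - s₀) := by
      constructor
      · rintro y ⟨s, hs, rfl⟩
        exact sub_le_sub_right (sup_le (ha.1 hs) hs₀a) s₀
      · intro b hb
        refine sub_le_iff_le_add.2 (ha.2 ?_)
        intro s hs
        have h1 : (s ⊔ s₀) - s₀ ≤ b := hb ⟨s, hs, rfl⟩
        calc s ≤ s ⊔ s₀ := le_sup_left
          _ = ((s ⊔ s₀) - s₀) + s₀ := (sub_add_cancel _ _).symm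
          _ ≤ b + s₀ := add_le_add_left h1 s₀
    have ha' : 0 ≤ a - s₀ := by
      have h0 : (0 : A) ∈ S' := ⟨s₀, hs₀, by simp⟩
      exact hlub'.1 h0
    have hmem : a - s₀ ∈ Eset g := by
      intro b hb
      rw [abs_of_nonneg ha'] at hb ⊢
      refine hlub'.2 ?_
      rintro y ⟨s, hs, rfl⟩
      have hy0 : (0:A) ≤ (s ⊔ s₀) - s₀ := hS'0 _ ⟨s, hs, rfl⟩
      have hyb : |(s ⊔ s₀) - s₀| ≤ b := by
        refine hS'E _ ⟨s, hs, rfl⟩ b ?_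
        intro c hc
        rw [abs_of_nonneg hy0]
        calc ((s ⊔ s₀) - s₀) ⊓ c ≤ (a - s₀) ⊓ c :=
              inf_le_inf_right c (hlub'.1 ⟨s, hs, rfl⟩)
          _ ≤ b := hb c hc
      rwa [abs_of_nonneg hy0] at hyb
    have hfin : (a - s₀) + s₀ ∈ Eset g := (Eset_ideal hg).add_mem hmem (hS hs₀)
    rwa [sub_add_cancel] at hfin

end Dir2
/-- An abelian ℓ-group is Archimedean if and only if every band is a polar,
i.e. every band `I` satisfies `I^⊥⊥ = I`. -/
theorem statement0 {A : Type*} [Lattice A] [AddCommGroup A]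
    [CovariantClass A A (· + ·) (· ≤ ·)] :
    IsArch A ↔ ∀ I : Set A, IsBand I → polar (polar I) = I := by
  constructor
  · -- Archimedean implies every band is a polar
    intro arch I hI
    ext x
    constructor
    · intro hx
      have hxp : x⁺ ∈ polar (polar I) := by
        refine polar_solid ?_ hx
        rw [abs_of_nonneg (posPart_nonneg x)]
        exact sup_le (le_abs_self x) (abs_nonneg x)
      have hxn : x⁻ ∈ polar (polar I) := by
        refine polar_solid ?_ hx
        rw [abs_of_nonneg (negPart_nonneg x)]
        exact sup_le (neg_le_abs x) (abs_nonneg x)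
      have h1 : x⁺ ∈ I := nonneg_bipolar_mem arch hI (posPart_nonneg x) hxp
      have h2 : x⁻ ∈ I := nonneg_bipolar_mem arch hI (negPart_nonneg x) hxn
      have h3 : x⁺ + -(x⁻) ∈ I := hI.ideal.add_mem h1 (hI.ideal.neg_mem h2)
      rwa [← sub_eq_add_neg, posPart_sub_negPart] at h3
    · intro hx
      rw [mem_polar_iff]
      intro t ht
      have h1 := mem_polar_iff.1 ht x hx
      rw [inf_comm (|x|) (|t|)]
      exact h1
  · -- every band a polar implies Archimedean
    intro H g h hgh
    have hg1 := hgh 1 le_rfl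
    have g0 : 0 ≤ g := by simpa using hg1.1
    have hgh1 : g ≤ h := by simpa using hg1.2
    have h0 : 0 ≤ h := g0.trans hgh1
    have hband := Eset_band (g := g) g0
    have hEg : g ∈ Eset g := by
      intro b hb
      have hgP : g ∈ Pset g := ⟨g0, 0, 1, zero_mem_polar _, le_rfl, by simp⟩
      have h1 := hb g hgP
      rw [abs_of_nonneg g0] at h1 ⊢
      rwa [inf_idem] at h1
    have hpolarsub : polar {g} ⊆ Eset g := by
      intro t₀ ht₀
      intro b hb
      have hmem : |t₀| ∈ polar {g} := by
        rw [mem_polar_iff]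
        intro t' ht'
        rw [abs_abs]
        exact mem_polar_iff.1 ht₀ t' ht'
      have habsP : |t₀| ∈ Pset g := ⟨abs_nonneg t₀, |t₀|, 0, hmem, abs_nonneg t₀, by simp⟩
      have h1 := hb |t₀| habsP
      rwa [inf_idem] at h1
    have hhE : h ∈ Eset g := by
      rw [← H (Eset g) hband, mem_polar_iff]
      intro t ht
      have htg : t ∈ polar {g} := by
        rw [mem_polar_iff]
        intro t' ht'
        simp only [Set.mem_singleton_iff] at ht'
        rw [ht']
        exact mem_polar_iff.1 ht g hEg
      have htE : t ∈ Eset g := hpolarsub htg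
      have ht0 : t = 0 := by
        refine labs_eq_zero ?_
        have h1 := mem_polar_iff.1 ht t htE
        rwa [inf_idem] at h1
      rw [ht0, abs_zero]
      exact inf_eq_right.2 (abs_nonneg h)
    have hfinal : |h| ≤ h - g := by
      refine hhE (h - g) ?_
      intro c hc
      obtain ⟨hc0, c₀, n, hc₀, hc₀0, hle⟩ := hc
      rw [abs_of_nonneg h0]
      have hggc : g ⊓ c₀ = 0 := by
        have h1 := mem_polar_iff.1 hc₀ g rfl
        rw [abs_of_nonneg hc₀0, abs_of_nonneg g0] at h1
        rw [inf_comm]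
        exact h1
      have hn1 : (n + 1) • g ≤ h := (hgh (n + 1) (Nat.le_add_left 1 n)).2
      have step : h ⊓ (c₀ + n • g) + g ≤ h := by
        have e1 : h ⊓ (c₀ + n • g) + g = (h + g) ⊓ (c₀ + (n + 1) • g) := by
          rw [inf_add h (c₀ + n • g) g]
          congr 1
          rw [succ_nsmul]
          abel
        have e2 : (h + g) ⊓ (c₀ + h) = g ⊓ c₀ + h := by
          rw [add_comm c₀ h, ← add_inf g c₀ h, add_comm h (g ⊓ c₀)]
        rw [e1]
        calc (h + g) ⊓ (c₀ + (n + 1) • g) ≤ (h + g) ⊓ (c₀ + h) :=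
              inf_le_inf_left _ (add_le_add_right hn1 c₀)
          _ = g ⊓ c₀ + h := e2
          _ = h := by rw [hggc, zero_add]
      calc h ⊓ c ≤ h ⊓ (c₀ + n • g) := inf_le_inf_left h hle
        _ ≤ h - g := le_sub_iff_add_le.2 step
    rw [abs_of_nonneg h0] at hfinal
    have hg_le : g ≤ 0 := by
      have h1 : h + g ≤ h := le_sub_iff_add_le.1 hfinal
      exact (add_le_iff_nonpos_right h).1 h1
    exact le_antisymm hg_le g0
end

section
/- Every abelian ℓ-group with the principal projection property (i.e., every projectable abelian ℓ-group) is Archimedean. -/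
/-- The principal band generated by `x`: the smallest band containing `x`. -/
def principalBand {A : Type*} [Lattice A] [AddCommGroup A] (x : A) : Set A :=
  ⋂₀ {I : Set A | IsBand I ∧ x ∈ I}

/-- A projection band: every element of the group splits as a sum of an element
of `B` and an element of `B^⊥`. -/
def IsProjectionBand {A : Type*} [Lattice A] [AddCommGroup A] (B : Set A) : Prop :=
  ∀ g : A, ∃ a ∈ B, ∃ b ∈ polar B, g = a + b

section Aux
variable {A : Type*} [Lattice A] [AddCommGroup A] [CovariantClass A A (· + ·) (· ≤ ·)]

lemma my_inf_add_le (x u v : A) (hx : 0 ≤ x) (hu : 0 ≤ u) (hv : 0 ≤ v) :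
    x ⊓ (u + v) ≤ x ⊓ u + x ⊓ v := by
  have h1 : x ⊓ (u + v) - u ≤ x :=
    sub_le_iff_le_add.2 (le_trans inf_le_left (le_add_of_nonneg_right hu))
  have h2 : x ⊓ (u + v) - u ≤ v := sub_le_iff_le_add'.2 inf_le_right
  have h3 : (x ⊓ (u + v) - u) ⊔ 0 ≤ x ⊓ v := sup_le (le_inf h1 h2) (le_inf hx hv)
  have h4 : x ⊓ (u + v) ≤ u + (x ⊓ v) := by
    calc x ⊓ (u + v) = u + (x ⊓ (u + v) - u) := by abel
      _ ≤ u + ((x ⊓ (u + v) - u) ⊔ 0) := add_le_add_right le_sup_left u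
      _ ≤ u + (x ⊓ v) := add_le_add_right h3 u
  have h5 : x ⊓ (u + v) - (x ⊓ v) ≤ x ⊓ u :=
    le_inf (le_trans (sub_le_self _ (le_inf hx hv)) inf_le_left) (sub_le_iff_le_add.2 h4)
  exact sub_le_iff_le_add.1 h5

lemma my_inf_nsmul (x y : A) (hx : 0 ≤ x) (hy : 0 ≤ y) (hxy : x ⊓ y = 0) :
    ∀ n : ℕ, x ⊓ n • y = 0 := by
  intro n
  induction n with
  | zero => simpa using inf_eq_right.2 hx
  | succ n ih =>
    refine le_antisymm ?_ (le_inf hx (nsmul_nonneg hy _))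
    calc x ⊓ (n + 1) • y = x ⊓ (n • y + y) := by rw [succ_nsmul]
      _ ≤ x ⊓ n • y + x ⊓ y := my_inf_add_le x _ _ hx (nsmul_nonneg hy n) hy
      _ = 0 := by rw [ih, hxy, add_zero]

lemma my_abs_eq_absl (x : A) : |x| = absl x := by
  rw [absl, ← posPart_def, ← negPart_def, posPart_add_negPart]

lemma my_absl_nonneg (x : A) : 0 ≤ absl x := by rw [← my_abs_eq_absl]; exact abs_nonneg x

lemma my_absl_of_nonneg {x : A} (hx : 0 ≤ x) : absl x = x := by
  rw [← my_abs_eq_absl]; exact abs_of_nonneg hx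

/-- If `a` and `b` are disjoint and `0 ≤ a + b` then `0 ≤ a`. -/
lemma my_pos_of_disjoint (a b : A) (hab : |a| ⊓ |b| = 0) (hs : 0 ≤ a + b) : 0 ≤ a := by
  have h1 : -a ≤ b := by rwa [neg_le_iff_add_nonneg, add_comm]
  have h2 : a⁻ ≤ b⁺ := by
    rw [negPart_def, posPart_def]; exact sup_le_sup_right h1 0
  have h3 : a⁻ ≤ |a| ⊓ |b| := by
    refine le_inf ?_ (h2.trans ?_)
    · rw [negPart_def]; exact sup_le (neg_le_abs a) (abs_nonneg a)
    · rw [posPart_def]; exact sup_le (le_abs_self b) (abs_nonneg b)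
  rw [hab] at h3
  exact negPart_eq_zero.1 (le_antisymm h3 (negPart_nonneg a))

/-- The key predicate: `x` is the supremum of `x ⊓ n • g`. -/
def Jpos (g x : A) : Prop := IsLUB (Set.range fun n : ℕ => x ⊓ n • g) x

lemma Jpos_mono {g x y : A} (hxy : y ≤ x) (hx : Jpos g x) : Jpos g y := by
  constructor
  · rintro _ ⟨n, rfl⟩; exact inf_le_left
  · intro z hz
    have key : ∀ n : ℕ, x ⊓ n • g ≤ z + (x - y) := by
      intro n
      have h1 : x ⊓ n • g ≤ (x - y) + y ⊓ n • g := by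
        rw [add_inf]
        refine le_inf (by simpa using inf_le_left) ?_
        exact le_trans inf_le_right (le_add_of_nonneg_left (sub_nonneg.2 hxy))
      have h2 : y ⊓ n • g ≤ z := hz ⟨n, rfl⟩
      calc x ⊓ n • g ≤ (x - y) + y ⊓ n • g := h1
        _ ≤ (x - y) + z := add_le_add_right h2 _
        _ = z + (x - y) := add_comm _ _
    have hxle : x ≤ z + (x - y) := hx.2 (by rintro _ ⟨n, rfl⟩; exact key n)
    have := sub_le_iff_le_add.2 hxle
    calc y = x - (x - y) := by abel
      _ ≤ z := this
end Aux

section Aux2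
variable {A : Type*} [Lattice A] [AddCommGroup A] [CovariantClass A A (· + ·) (· ≤ ·)]

lemma Jpos_add {g x y : A} (hg : 0 ≤ g) (hx0 : 0 ≤ x) (hy0 : 0 ≤ y)
    (hx : Jpos g x) (hy : Jpos g y) : Jpos g (x + y) := by
  constructor
  · rintro _ ⟨n, rfl⟩; exact inf_le_left
  · intro z hz
    have key : ∀ m n : ℕ, x ⊓ n • g + y ⊓ m • g ≤ z := by
      intro m n
      have h1 : x ⊓ n • g + y ⊓ m • g ≤ (x + y) ⊓ (n + m) • g := by
        refine le_inf (add_le_add inf_le_left inf_le_left) ?_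
        rw [add_nsmul]; exact add_le_add inf_le_right inf_le_right
      exact h1.trans (hz ⟨n + m, rfl⟩)
    have hxz : ∀ m : ℕ, x ≤ z - y ⊓ m • g := by
      intro m
      refine hx.2 ?_
      rintro _ ⟨n, rfl⟩
      exact le_sub_iff_add_le.2 (key m n)
    have hyz : y ≤ z - x := by
      refine hy.2 ?_
      rintro _ ⟨m, rfl⟩
      rw [le_sub_iff_add_le, add_comm]
      exact le_sub_iff_add_le.1 (hxz m)
    calc x + y = y + x := add_comm _ _
      _ ≤ z := le_sub_iff_add_le.1 hyz

lemma Jpos_self {g : A} (hg : 0 ≤ g) : Jpos g g := by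
  constructor
  · rintro _ ⟨n, rfl⟩; exact inf_le_left
  · intro z hz
    have := hz ⟨1, rfl⟩
    simpa using this

lemma Jpos_zero {g : A} (hg : 0 ≤ g) : Jpos g 0 := by
  constructor
  · rintro _ ⟨n, rfl⟩; exact inf_le_left
  · intro z hz
    have := hz ⟨0, rfl⟩
    simpa using this

lemma Jpos_lub {g p : A} (P : Set A) (hP : ∀ x ∈ P, Jpos g x) (hp : IsLUB P p) :
    Jpos g p := by
  constructor
  · rintro _ ⟨n, rfl⟩; exact inf_le_left
  · intro z hz
    refine hp.2 ?_
    intro x hx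
    refine (hP x hx).2 ?_
    rintro _ ⟨n, rfl⟩
    exact (inf_le_inf_right _ (hp.1 hx)).trans (hz ⟨n, rfl⟩)

/-- The set `J g`. -/
def Jset {A : Type*} [Lattice A] [AddCommGroup A] (g : A) : Set A :=
  {x : A | Jpos g (absl x)}

lemma mem_Jset {g x : A} : x ∈ Jset g ↔ Jpos g |x| := by
  rw [Jset, Set.mem_setOf_eq, my_abs_eq_absl]

lemma Jset_band {g : A} (hg : 0 ≤ g) : IsBand (Jset g) := by
  have habs : ∀ x y : A, |x| ≤ |y| → y ∈ Jset g → x ∈ Jset g := by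
    intro x y hxy hy
    exact mem_Jset.2 (Jpos_mono hxy (mem_Jset.1 hy))
  have hadd' : ∀ x y : A, x ∈ Jset g → y ∈ Jset g → Jpos g (|x| + |y|) := by
    intro x y hx hy
    exact Jpos_add hg (abs_nonneg x) (abs_nonneg y) (mem_Jset.1 hx) (mem_Jset.1 hy)
  have hJabs : ∀ x y : A, x ∈ Jset g → y ∈ Jset g → ∀ z : A, |z| ≤ |x| + |y| → z ∈ Jset g := by
    intro x y hx hy z hz
    refine mem_Jset.2 (Jpos_mono ?_ (hadd' x y hx hy))
    exact hz
  have hzero : (0 : A) ∈ Jset g := by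
    refine mem_Jset.2 ?_
    simpa using Jpos_zero hg
  refine ⟨⟨hzero, ?_, ?_, ?_, ?_, ?_⟩, ?_⟩
  · -- add
    intro a b ha hb
    refine hJabs a b ha hb _ ?_
    refine abs_le'.2 ⟨?_, ?_⟩
    · exact add_le_add (le_abs_self a) (le_abs_self b)
    · rw [neg_add]
      exact add_le_add (neg_le_abs a) (neg_le_abs b)
  · -- neg
    intro a ha
    have : |(-a)| = |a| := by
      show -a ⊔ -(-a) = a ⊔ -a
      rw [neg_neg, sup_comm]
    exact habs _ a (le_of_eq this) ha
  · -- sup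
    intro a b ha hb
    refine hJabs a b ha hb _ ?_
    refine abs_le'.2 ⟨?_, ?_⟩
    · exact sup_le ((le_abs_self a).trans (le_add_of_nonneg_right (abs_nonneg b)))
        ((le_abs_self b).trans (le_add_of_nonneg_left (abs_nonneg a)))
    · rw [neg_sup]
      exact inf_le_left.trans ((neg_le_abs a).trans (le_add_of_nonneg_right (abs_nonneg b)))
  · -- inf
    intro a b ha hb
    refine hJabs a b ha hb _ ?_
    refine abs_le'.2 ⟨?_, ?_⟩
    · exact inf_le_left.trans ((le_abs_self a).trans (le_add_of_nonneg_right (abs_nonneg b)))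
    · rw [neg_inf]
      exact sup_le ((neg_le_abs a).trans (le_add_of_nonneg_right (abs_nonneg b)))
        ((neg_le_abs b).trans (le_add_of_nonneg_left (abs_nonneg a)))
  · -- convex
    intro a b c ha hc hab hbc
    refine hJabs a c ha hc b ?_
    refine abs_le'.2 ⟨?_, ?_⟩
    · exact (hbc.trans (le_abs_self c)).trans (le_add_of_nonneg_left (abs_nonneg a))
    · exact ((neg_le_neg_iff.2 hab).trans (neg_le_abs a)).trans (le_add_of_nonneg_right (abs_nonneg c))
  · -- sup_closed
    intro S hS s hs
    rcases S.eq_empty_or_nonempty with rfl | ⟨x₀, hx₀⟩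
    · -- s is a least element, so A is "trivial at s": s = 0
      have hleast : ∀ x : A, s ≤ x := fun x => hs.2 (by simp [upperBounds])
      have h1 : s ≤ 0 := hleast 0
      have h2 : (0 : A) ≤ s := by
        have := hleast (s + s)
        exact (le_add_iff_nonneg_left s).1 this
      have : s = 0 := le_antisymm h1 h2
      rw [this]; exact hzero
    · have hsneg : Jpos g s⁻ := by
        have h1 : s⁻ ≤ |x₀| := by
          have : s⁻ ≤ x₀⁻ := by
            rw [negPart_def, negPart_def]
            exact sup_le_sup_right (neg_le_neg_iff.2 (hs.1 hx₀)) 0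
          exact this.trans (by rw [negPart_def]; exact sup_le (neg_le_abs x₀) (abs_nonneg x₀))
        exact Jpos_mono h1 (mem_Jset.1 (hS hx₀))
      have hspos : Jpos g s⁺ := by
        refine Jpos_lub ((fun x => x⁺) '' S) ?_ ?_
        · rintro _ ⟨x, hx, rfl⟩
          refine Jpos_mono ?_ (mem_Jset.1 (hS hx))
          show x⁺ ≤ |x|
          rw [posPart_def]; exact sup_le (le_abs_self x) (abs_nonneg x)
        · constructor
          · rintro _ ⟨x, hx, rfl⟩
            show x⁺ ≤ s⁺
            rw [posPart_def, posPart_def]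
            exact sup_le_sup_right (hs.1 hx) 0
          · intro z hz
            have hsz : s ≤ z := by
              refine hs.2 ?_
              intro x hx
              exact (le_posPart x).trans (hz ⟨x, hx, rfl⟩)
            have h0z : (0 : A) ≤ z := (posPart_nonneg x₀).trans (hz ⟨x₀, hx₀, rfl⟩)
            rw [posPart_def]; exact sup_le hsz h0z
      have : Jpos g (s⁺ + s⁻) := Jpos_add hg (posPart_nonneg s) (negPart_nonneg s) hspos hsneg
      refine mem_Jset.2 ?_
      rwa [posPart_add_negPart s] at this

end Aux2

/-- Every abelian ℓ-group with the principal projection property is Archimedean. -/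
theorem statement1 {A : Type*} [Lattice A] [AddCommGroup A]
    [CovariantClass A A (· + ·) (· ≤ ·)]
    (h : ∀ x : A, IsProjectionBand (principalBand x)) :
    IsArch A := by
  intro g v hgv
  have hg0 : 0 ≤ g := by simpa using (hgv 1 le_rfl).1
  have hv0 : 0 ≤ v := le_trans (by simpa using hg0 : (0:A) ≤ 1 • g) (hgv 1 le_rfl).2
  obtain ⟨a, haB, b, hbP, hvab⟩ := h g v
  have hgB : g ∈ principalBand g := fun I hI => hI.2
  have hbg : absl b ⊓ absl g = 0 := hbP g hgB
  have hab : absl a ⊓ absl b = 0 := by rw [inf_comm]; exact hbP a haB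
  have hab' : |a| ⊓ |b| = 0 := by rwa [my_abs_eq_absl, my_abs_eq_absl]
  have ha0 : 0 ≤ a := my_pos_of_disjoint a b hab' (hvab ▸ hv0)
  have hb0 : 0 ≤ b := by
    refine my_pos_of_disjoint b a ?_ ?_
    · rwa [inf_comm] at hab'
    · rwa [add_comm, ← hvab]
  have hbg' : b ⊓ g = 0 := by
    have := hbg
    rwa [my_absl_of_nonneg hb0, my_absl_of_nonneg hg0] at this
  have hbng : ∀ n : ℕ, b ⊓ n • g = 0 := my_inf_nsmul b g hb0 hg0 hbg'
  have hga : ∀ n : ℕ, n • g ≤ a := by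
    intro n
    have h1 : n • g ≤ a + b := by
      rw [← hvab]
      rcases Nat.eq_zero_or_pos n with rfl | hn
      · simpa using hv0
      · exact (hgv n hn).2
    have h2 : n • g = n • g ⊓ (a + b) := (inf_eq_left.2 h1).symm
    have h3 : n • g ⊓ (a + b) ≤ n • g ⊓ a + n • g ⊓ b :=
      my_inf_add_le _ _ _ (nsmul_nonneg hg0 n) ha0 hb0
    have h4 : n • g ⊓ b = 0 := by rw [inf_comm]; exact hbng n
    calc n • g = n • g ⊓ (a + b) := h2
      _ ≤ n • g ⊓ a + n • g ⊓ b := h3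
      _ = n • g ⊓ a := by rw [h4, add_zero]
      _ ≤ a := inf_le_right
  -- a belongs to the band Jset g
  have hgJ : g ∈ Jset g := mem_Jset.2 (by rw [abs_of_nonneg hg0]; exact Jpos_self hg0)
  have haJ : a ∈ Jset g := haB (Jset g) ⟨Jset_band hg0, hgJ⟩
  have haJ' : Jpos g a := by
    have := mem_Jset.1 haJ
    rwa [abs_of_nonneg ha0] at this
  have hfin : a ≤ a - g := by
    refine haJ'.2 ?_
    rintro _ ⟨n, rfl⟩
    refine inf_le_right.trans ?_
    rw [le_sub_iff_add_le, ← succ_nsmul]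
    exact hga (n + 1)
  have hgle : g ≤ 0 := by
    have h0 : (0 : A) ≤ a - g - a := sub_nonneg.2 hfin
    have h1 : a - g - a = -g := by abel
    rw [h1] at h0
    exact neg_nonneg.1 h0
  exact le_antisymm hgle hg0
end

section
/- For an abelian ℓ-group A, the following are equivalent: (i) A is complemented; (iii) A has a weak unit, the lattice of principal polars of A is bounded, and the inclusion of principal polars into polars is a homomorphism of Boolean algebras — concretely, there exists w ∈ A with w^⊥⊥ = A and for every x ∈ A there exists y ∈ A with x^⊥ = y^⊥⊥; (iv) for every g ∈ A there exists f ∈ A such that for every minimal prime ideal p of A, g ∈ p if and only if f ∉ p (i.e., the zero set V_m(g) of g in the minimal spectrum is the complement of the zero set V_m(f) of f). -/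
/-- A prime ideal: a proper ideal such that `a ⊓ b = 0` implies `a ∈ p` or `b ∈ p`. -/
def IsPrimeIdeal {A : Type*} [Lattice A] [AddCommGroup A] (p : Set A) : Prop :=
  IsIdeal p ∧ p ≠ Set.univ ∧ ∀ a b : A, a ⊓ b = 0 → a ∈ p ∨ b ∈ p

/-- A minimal prime ideal: a prime ideal containing no strictly smaller prime ideal. -/
def IsMinimalPrimeLGroup {A : Type*} [Lattice A] [AddCommGroup A] (p : Set A) : Prop :=
  IsPrimeIdeal p ∧ ∀ q : Set A, IsPrimeIdeal q → q ⊆ p → q = p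

/-- A weak unit: `w ≥ 0` and `w ⊓ |g| = 0` implies `g = 0`. -/
def IsWeakUnit {A : Type*} [Lattice A] [AddCommGroup A] (w : A) : Prop :=
  0 ≤ w ∧ ∀ g : A, w ⊓ absl g = 0 → g = 0

/-- A complemented ℓ-group: for every `x` there is `y` with `|x| ⊓ |y| = 0` and
`|x| ⊔ |y|` a weak unit. -/
def ComplementedLGroup (A : Type*) [Lattice A] [AddCommGroup A] : Prop :=
  ∀ x : A, ∃ y : A, absl x ⊓ absl y = 0 ∧ IsWeakUnit (absl x ⊔ absl y)

section Aux
variable {A : Type*} [Lattice A] [AddCommGroup A] [CovariantClass A A (· + ·) (· ≤ ·)]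

theorem absl_eq_abs (g : A) : absl g = |g| := posPart_add_negPart g

theorem absl_nonneg' (g : A) : 0 ≤ absl g := by rw [absl_eq_abs]; exact abs_nonneg g

theorem absl_zero' : absl (0 : A) = 0 := by
  rw [absl_eq_abs]
  exact abs_of_nonneg le_rfl

theorem absl_of_nonneg' {g : A} (h : 0 ≤ g) : absl g = g := by
  rw [absl_eq_abs]; exact abs_of_nonneg h

theorem le_absl' (g : A) : g ≤ absl g := by rw [absl_eq_abs]; exact le_abs_self g

theorem neg_absl_le' (g : A) : -(absl g) ≤ g := by
  rw [absl_eq_abs]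
  exact neg_le.mpr (neg_le_abs g)

theorem absl_eq_zero' {g : A} (h : absl g = 0) : g = 0 := by
  have h1 := le_absl' g
  have h2 := neg_absl_le' g
  rw [h] at h1 h2
  rw [neg_zero] at h2
  exact le_antisymm h1 h2

theorem absl_le_add (g h : A) : absl (g + h) ≤ absl g + absl h := by
  simp only [absl_eq_abs]
  refine sup_le ?_ ?_
  · exact add_le_add (le_abs_self g) (le_abs_self h)
  · rw [neg_add]
    exact add_le_add (neg_le_abs g) (neg_le_abs h)

theorem absl_neg' (g : A) : absl (-g) = absl g := by
  simp only [absl_eq_abs]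
  exact abs_neg g

theorem absl_sup_le (g h : A) : absl (g ⊔ h) ≤ absl g + absl h := by
  simp only [absl_eq_abs]
  refine sup_le (sup_le ?_ ?_) ?_
  · exact (le_abs_self g).trans (le_add_of_nonneg_right (abs_nonneg h))
  · exact (le_abs_self h).trans (le_add_of_nonneg_left (abs_nonneg g))
  · rw [neg_sup]
    refine inf_le_left.trans ?_
    exact (neg_le_abs g).trans (le_add_of_nonneg_right (abs_nonneg h))

theorem absl_inf_le (g h : A) : absl (g ⊓ h) ≤ absl g + absl h := by
  simp only [absl_eq_abs]
  refine sup_le ?_ ?_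
  · exact inf_le_left.trans ((le_abs_self g).trans (le_add_of_nonneg_right (abs_nonneg h)))
  · rw [neg_inf]
    refine sup_le ?_ ?_
    · exact (neg_le_abs g).trans (le_add_of_nonneg_right (abs_nonneg h))
    · exact (neg_le_abs h).trans (le_add_of_nonneg_left (abs_nonneg g))

theorem absl_between_le {a b c : A} (hab : a ≤ b) (hbc : b ≤ c) :
    absl b ≤ absl a + absl c := by
  simp only [absl_eq_abs]
  refine sup_le ?_ ?_
  · exact (hbc.trans (le_abs_self c)).trans (le_add_of_nonneg_left (abs_nonneg a))
  · have h1 : -b ≤ -a := neg_le_neg_iff.mpr hab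
    exact (h1.trans (neg_le_abs a)).trans (le_add_of_nonneg_right (abs_nonneg c))

/-- Riesz-type inequality: for nonnegative `a b c`, `a ⊓ (b + c) ≤ a ⊓ b + a ⊓ c`. -/
theorem inf_add_le_riesz {a b c : A} (ha : 0 ≤ a) (hb : 0 ≤ b) (hc : 0 ≤ c) :
    a ⊓ (b + c) ≤ (a ⊓ b) + (a ⊓ c) := by
  have e1 : (a ⊓ b) + (a ⊓ c) = ((a ⊓ b) + a) ⊓ ((a ⊓ b) + c) := add_inf a c (a ⊓ b)
  have e2 : (a ⊓ b) + a = (a + a) ⊓ (a + b) := by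
    rw [add_comm (a ⊓ b) a, add_inf]
  have e3 : (a ⊓ b) + c = (c + a) ⊓ (c + b) := by
    rw [add_comm (a ⊓ b) c, add_inf]
  rw [e1, e2, e3]
  refine le_inf (le_inf ?_ ?_) (le_inf ?_ ?_)
  · exact inf_le_left.trans (le_add_of_nonneg_right ha)
  · exact inf_le_left.trans (le_add_of_nonneg_right hb)
  · exact inf_le_left.trans (le_add_of_nonneg_left hc)
  · exact inf_le_right.trans (le_of_eq (add_comm b c))

theorem nonneg_left_of_inf_eq_zero {a b : A} (h : a ⊓ b = 0) : 0 ≤ a := by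
  rw [← h]; exact inf_le_left

theorem nonneg_right_of_inf_eq_zero {a b : A} (h : a ⊓ b = 0) : 0 ≤ b := by
  rw [← h]; exact inf_le_right

theorem disj_add {a b c : A} (hab : a ⊓ b = 0) (hac : a ⊓ c = 0) : a ⊓ (b + c) = 0 := by
  have ha := nonneg_left_of_inf_eq_zero hab
  have hb := nonneg_right_of_inf_eq_zero hab
  have hc := nonneg_right_of_inf_eq_zero hac
  refine le_antisymm ?_ (le_inf ha (add_nonneg hb hc))
  calc a ⊓ (b + c) ≤ (a ⊓ b) + (a ⊓ c) := inf_add_le_riesz ha hb hc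
    _ = 0 := by rw [hab, hac, add_zero]

theorem disj_nsmul {a b : A} (h : a ⊓ b = 0) (n : ℕ) : a ⊓ (n • b) = 0 := by
  induction n with
  | zero => simpa using inf_eq_right.2 (nonneg_left_of_inf_eq_zero h)
  | succ n ih =>
    rw [succ_nsmul]
    exact disj_add ih h

theorem disj_nsmul_nsmul {a b : A} (h : a ⊓ b = 0) (n : ℕ) : (n • a) ⊓ (n • b) = 0 := by
  have h1 : (n • b) ⊓ a = 0 := by
    rw [inf_comm]
    exact disj_nsmul h n
  rw [inf_comm]
  exact disj_nsmul h1 n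

theorem IsIdeal.absl_mem_iff {I : Set A} (hI : IsIdeal I) {g : A} : g ∈ I ↔ absl g ∈ I := by
  constructor
  · intro hg
    exact hI.add_mem (hI.sup_mem hg hI.zero_mem) (hI.sup_mem (hI.neg_mem hg) hI.zero_mem)
  · intro hg
    exact hI.convex (hI.neg_mem hg) hg (neg_absl_le' g) (le_absl' g)

theorem IsIdeal.mem_of_le {I : Set A} (hI : IsIdeal I) {a g : A}
    (ha : a ∈ I) (h0 : 0 ≤ g) (h : g ≤ a) : g ∈ I :=
  hI.convex hI.zero_mem ha h0 h

theorem IsPrimeIdeal.inf_not_mem {p : Set A} (hp : IsPrimeIdeal p) {a b : A}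
    (ha : a ∉ p) (hb : b ∉ p) : a ⊓ b ∉ p := by
  intro h
  set d := a ⊓ b with hd
  have key : (a - d) ⊓ (b - d) = 0 := by
    rw [sub_eq_add_neg, sub_eq_add_neg, add_comm a, add_comm b, ← add_inf, ← hd,
      add_comm, add_neg_cancel]
  rcases hp.2.2 _ _ key with h1 | h1
  · exact ha (by simpa using hp.1.add_mem h1 h)
  · exact hb (by simpa using hp.1.add_mem h1 h)

/-- The ideal generated by an ideal `q` together with a positive element `a`. -/
def genId (q : Set A) (a : A) : Set A :=
  {g | ∃ c ∈ q, 0 ≤ c ∧ ∃ n : ℕ, absl g ≤ c + n • a}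

theorem genId_isIdeal {q : Set A} {a : A} (hq : IsIdeal q) (ha : 0 ≤ a) :
    IsIdeal (genId q a) := by
  have comb : ∀ {g h : A}, g ∈ genId q a → h ∈ genId q a →
      ∀ x : A, absl x ≤ absl g + absl h → x ∈ genId q a := by
    rintro g h ⟨c, hc, hc0, n, hn⟩ ⟨c', hc', hc'0, m, hm⟩ x hx
    refine ⟨c + c', hq.add_mem hc hc', add_nonneg hc0 hc'0, n + m, ?_⟩
    calc absl x ≤ absl g + absl h := hx
      _ ≤ (c + n • a) + (c' + m • a) := add_le_add hn hm
      _ = (c + c') + (n + m) • a := by rw [add_nsmul]; abel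
  constructor
  · exact ⟨0, hq.zero_mem, le_rfl, 0, by simp [absl_zero']⟩
  · intro g h hg hh
    exact comb hg hh _ (absl_le_add g h)
  · rintro g ⟨c, hc, hc0, n, hn⟩
    exact ⟨c, hc, hc0, n, by rwa [absl_neg']⟩
  · intro g h hg hh
    exact comb hg hh _ (absl_sup_le g h)
  · intro g h hg hh
    exact comb hg hh _ (absl_inf_le g h)
  · intro g h k hg hk hgh hhk
    exact comb hg hk _ (absl_between_le hgh hhk)

theorem subset_genId {q : Set A} {a : A} (hq : IsIdeal q) : q ⊆ genId q a := by
  intro g hg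
  exact ⟨absl g, (hq.absl_mem_iff).1 hg, absl_nonneg' g, 0, by simp⟩

theorem mem_genId_self {q : Set A} {a : A} (hq : IsIdeal q) (ha : 0 ≤ a) : a ∈ genId q a :=
  ⟨0, hq.zero_mem, le_rfl, 1, by simp [absl_of_nonneg' ha]⟩

/-- Zorn: an ideal maximal with respect to being disjoint from a meet-closed set `M`
of positive nonzero elements is prime. -/
theorem exists_prime_disjoint {M : Set A} (hM0 : (0 : A) ∉ M) (hMpos : ∀ m ∈ M, 0 ≤ m)
    (hMinf : ∀ m ∈ M, ∀ m' ∈ M, m ⊓ m' ∈ M) (hMne : M.Nonempty) :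
    ∃ q : Set A, IsPrimeIdeal q ∧ ∀ m ∈ M, m ∉ q := by
  set S : Set (Set A) := {I | IsIdeal I ∧ ∀ m ∈ M, m ∉ I} with hS
  have h0S : ({0} : Set A) ∈ S := by
    refine ⟨⟨rfl, ?_, ?_, ?_, ?_, ?_⟩, ?_⟩
    · rintro a b rfl rfl; simp
    · rintro a rfl; simp
    · rintro a b rfl rfl; simp
    · rintro a b rfl rfl; simp
    · intro a b c ha hc hab hbc
      have ha' : a = 0 := ha
      have hc' : c = 0 := hc
      have : b = 0 := le_antisymm (hc' ▸ hbc) (ha' ▸ hab)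
      exact this
    · intro m hm hm0
      have : m = 0 := hm0
      exact hM0 (this ▸ hm)
  obtain ⟨q, -, hqS, hqmax⟩ : ∃ m, ({0} : Set A) ⊆ m ∧ Maximal (· ∈ S) m := by
    apply zorn_subset_nonempty S ?_ _ h0S
    intro c hcS hchain hcne
    refine ⟨⋃₀ c, ⟨?_, ?_⟩, fun s hs => Set.subset_sUnion_of_mem hs⟩
    · obtain ⟨I0, hI0⟩ := hcne
      constructor
      · exact ⟨I0, hI0, (hcS hI0).1.zero_mem⟩
      · rintro x y ⟨I, hI, hxI⟩ ⟨J, hJ, hyJ⟩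
        rcases hchain.total hI hJ with h | h
        · exact ⟨J, hJ, (hcS hJ).1.add_mem (h hxI) hyJ⟩
        · exact ⟨I, hI, (hcS hI).1.add_mem hxI (h hyJ)⟩
      · rintro x ⟨I, hI, hxI⟩
        exact ⟨I, hI, (hcS hI).1.neg_mem hxI⟩
      · rintro x y ⟨I, hI, hxI⟩ ⟨J, hJ, hyJ⟩
        rcases hchain.total hI hJ with h | h
        · exact ⟨J, hJ, (hcS hJ).1.sup_mem (h hxI) hyJ⟩
        · exact ⟨I, hI, (hcS hI).1.sup_mem hxI (h hyJ)⟩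
      · rintro x y ⟨I, hI, hxI⟩ ⟨J, hJ, hyJ⟩
        rcases hchain.total hI hJ with h | h
        · exact ⟨J, hJ, (hcS hJ).1.inf_mem (h hxI) hyJ⟩
        · exact ⟨I, hI, (hcS hI).1.inf_mem hxI (h hyJ)⟩
      · rintro x y z ⟨I, hI, hxI⟩ ⟨J, hJ, hzJ⟩ hxy hyz
        rcases hchain.total hI hJ with h | h
        · exact ⟨J, hJ, (hcS hJ).1.convex (h hxI) hzJ hxy hyz⟩
        · exact ⟨I, hI, (hcS hI).1.convex hxI (h hzJ) hxy hyz⟩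
    · rintro m hm ⟨I, hI, hmI⟩
      exact (hcS hI).2 m hm hmI
  have hqI : IsIdeal q := hqS.1
  have hqM : ∀ m ∈ M, m ∉ q := hqS.2
  refine ⟨q, ⟨hqI, ?_, ?_⟩, hqM⟩
  · obtain ⟨m, hm⟩ := hMne
    intro h
    exact hqM m hm (h ▸ Set.mem_univ m)
  · intro a b hab
    by_contra hcon
    push_neg at hcon
    obtain ⟨haq, hbq⟩ := hcon
    have ha : 0 ≤ a := nonneg_left_of_inf_eq_zero hab
    have hb : 0 ≤ b := nonneg_right_of_inf_eq_zero hab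
    -- the ideal generated by q and a must meet M
    have hmeet : ∀ x : A, 0 ≤ x → x ∉ q → ∃ m ∈ M, m ∈ genId q x := by
      intro x hx hxq
      by_contra hno
      push_neg at hno
      have hgS : genId q x ∈ S := ⟨genId_isIdeal hqI hx, hno⟩
      have := hqmax hgS (subset_genId hqI)
      exact hxq (this (mem_genId_self hqI hx))
    obtain ⟨m₁, hm₁M, c₁, hc₁, hc₁0, n₁, hn₁⟩ := hmeet a ha haq
    obtain ⟨m₂, hm₂M, c₂, hc₂, hc₂0, n₂, hn₂⟩ := hmeet b hb hbq
    set N := n₁ + n₂ with hN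
    have hb₁ : m₁ ≤ (c₁ + c₂) + N • a := by
      calc m₁ ≤ absl m₁ := le_absl' m₁
        _ ≤ c₁ + n₁ • a := hn₁
        _ ≤ (c₁ + c₂) + N • a := by
            refine add_le_add (le_add_of_nonneg_right hc₂0) ?_
            exact nsmul_le_nsmul_left ha (Nat.le_add_right n₁ n₂)
    have hb₂ : m₂ ≤ (c₁ + c₂) + N • b := by
      calc m₂ ≤ absl m₂ := le_absl' m₂
        _ ≤ c₂ + n₂ • b := hn₂
        _ ≤ (c₁ + c₂) + N • b := by
            refine add_le_add (le_add_of_nonneg_left hc₁0) ?_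
            exact nsmul_le_nsmul_left hb (Nat.le_add_left n₂ n₁)
    have hinf : m₁ ⊓ m₂ ≤ c₁ + c₂ := by
      calc m₁ ⊓ m₂ ≤ ((c₁ + c₂) + N • a) ⊓ ((c₁ + c₂) + N • b) := inf_le_inf hb₁ hb₂
        _ = (c₁ + c₂) + (N • a ⊓ N • b) := (add_inf _ _ _).symm
        _ = c₁ + c₂ := by rw [disj_nsmul_nsmul hab N, add_zero]
    have hmem : m₁ ⊓ m₂ ∈ q :=
      hqI.mem_of_le (hqI.add_mem hc₁ hc₂) (le_inf (hMpos _ hm₁M) (hMpos _ hm₂M)) hinf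
    exact hqM _ (hMinf _ hm₁M _ hm₂M) hmem

/-- In a minimal prime `p`, every element of `p` is disjoint from something outside `p`. -/
theorem minimal_prime_polar {p : Set A} (hp : IsMinimalPrimeLGroup p) {g : A} (hg : g ∈ p) :
    ∃ h : A, h ∉ p ∧ absl g ⊓ absl h = 0 := by
  by_contra hcon
  push_neg at hcon
  have hcon' : ∀ h : A, absl g ⊓ absl h = 0 → h ∈ p := by
    intro h hh
    by_contra hnp
    exact hcon h hnp hh
  set a := absl g with haDef
  have hpI : IsIdeal p := hp.1.1
  have ha0 : a ≠ 0 := by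
    intro h0
    apply hp.1.2.1
    ext z
    simp only [Set.mem_univ, iff_true]
    apply hcon' z
    rw [h0]
    exact inf_eq_left.2 (absl_nonneg' z)
  set P : Set A := {x | 0 ≤ x ∧ x ∉ p} with hPdef
  set M : Set A := insert a (P ∪ (fun x => a ⊓ x) '' P) with hM
  have haM : a ∈ M := Set.mem_insert _ _
  have mk1 : ∀ x : A, x ∈ P → x ∈ M := fun x hx => Set.mem_insert_of_mem _ (Or.inl hx)
  have mk2 : ∀ x : A, x ∈ P → a ⊓ x ∈ M :=
    fun x hx => Set.mem_insert_of_mem _ (Or.inr ⟨x, hx, rfl⟩)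
  have hPinf : ∀ x ∈ P, ∀ y ∈ P, x ⊓ y ∈ P := by
    rintro x ⟨hx0, hxp⟩ y ⟨hy0, hyp⟩
    exact ⟨le_inf hx0 hy0, hp.1.inf_not_mem hxp hyp⟩
  have hMpos : ∀ m ∈ M, 0 ≤ m := by
    rintro m (rfl | ⟨h0, -⟩ | ⟨x, ⟨hx0, -⟩, rfl⟩)
    · exact absl_nonneg' g
    · exact h0
    · exact le_inf (absl_nonneg' g) hx0
  have hdisjx : ∀ x : A, 0 ≤ x → x ∉ p → a ⊓ x ≠ 0 := by
    intro x hx0 hxp h0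
    apply hxp
    apply hcon' x
    rwa [absl_of_nonneg' hx0]
  have hM0 : (0 : A) ∉ M := by
    rintro (h | ⟨-, hnp⟩ | ⟨x, ⟨hx0, hxp⟩, h⟩)
    · exact ha0 h.symm
    · exact hnp hpI.zero_mem
    · exact hdisjx x hx0 hxp h
  have hMinf : ∀ m ∈ M, ∀ m' ∈ M, m ⊓ m' ∈ M := by
    rintro m (rfl | hmP | ⟨x, hxP, rfl⟩) m' (rfl | hmP' | ⟨y, hyP, rfl⟩)
    · rw [inf_idem]; exact haM
    · exact mk2 _ hmP'
    · have : a ⊓ (a ⊓ y) = a ⊓ y := by rw [← inf_assoc, inf_idem]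
      rw [this]; exact mk2 _ hyP
    · rw [inf_comm]; exact mk2 _ hmP
    · exact mk1 _ (hPinf _ hmP _ hmP')
    · have : m ⊓ (a ⊓ y) = a ⊓ (m ⊓ y) := by rw [inf_left_comm]
      rw [this]; exact mk2 _ (hPinf _ hmP _ hyP)
    · have : (a ⊓ x) ⊓ a = a ⊓ x := by
        rw [inf_comm (a ⊓ x) a, ← inf_assoc, inf_idem]
      rw [this]; exact mk2 _ hxP
    · have : (a ⊓ x) ⊓ m' = a ⊓ (x ⊓ m') := by rw [inf_assoc]
      rw [this]; exact mk2 _ (hPinf _ hxP _ hmP')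
    · have : (a ⊓ x) ⊓ (a ⊓ y) = a ⊓ (x ⊓ y) := by
        rw [inf_assoc, inf_left_comm x a y, ← inf_assoc, inf_idem]
      rw [this]; exact mk2 _ (hPinf _ hxP _ hyP)
  obtain ⟨q, hq, hqM⟩ := exists_prime_disjoint hM0 hMpos hMinf ⟨a, haM⟩
  have hqp : q ⊆ p := by
    intro z hz
    have hza : absl z ∈ q := (hq.1.absl_mem_iff).1 hz
    by_contra hzp
    have hzpabs : absl z ∉ p := fun h => hzp ((hpI.absl_mem_iff).2 h)
    exact hqM (absl z) (mk1 _ ⟨absl_nonneg' z, hzpabs⟩) hza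
  have := hp.2 q hq hqp
  apply hqM a haM
  rw [this]
  exact (hpI.absl_mem_iff).1 hg

/-- Every prime contains a minimal prime. -/
theorem exists_minimal_prime_le {p : Set A} (hp : IsPrimeIdeal p) :
    ∃ m : Set A, IsMinimalPrimeLGroup m ∧ m ⊆ p := by
  set S : Set (Set A) := {q | IsPrimeIdeal q ∧ q ⊆ p} with hS
  have hpS : p ∈ S := ⟨hp, subset_rfl⟩
  obtain ⟨m, -, hmS, hmmin⟩ : ∃ m, m ⊆ p ∧ Minimal (· ∈ S) m := by
    apply zorn_superset_nonempty S ?_ _ hpS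
    intro c hcS hchain hcne
    obtain ⟨q0, hq0⟩ := hcne
    refine ⟨⋂₀ c, ⟨⟨?_, ?_, ?_⟩, ?_⟩, fun s hs => Set.sInter_subset_of_mem hs⟩
    · constructor
      · exact fun q hq => (hcS hq).1.1.zero_mem
      · exact fun x y hx hy q hq => (hcS hq).1.1.add_mem (hx q hq) (hy q hq)
      · exact fun x hx q hq => (hcS hq).1.1.neg_mem (hx q hq)
      · exact fun x y hx hy q hq => (hcS hq).1.1.sup_mem (hx q hq) (hy q hq)
      · exact fun x y hx hy q hq => (hcS hq).1.1.inf_mem (hx q hq) (hy q hq)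
      · exact fun x y z hx hz hxy hyz q hq => (hcS hq).1.1.convex (hx q hq) (hz q hq) hxy hyz
    · intro h
      apply (hcS hq0).1.2.1
      apply Set.eq_univ_of_univ_subset
      rw [← h]
      exact Set.sInter_subset_of_mem hq0
    · intro x y hxy
      by_contra hcon
      push_neg at hcon
      obtain ⟨hx, hy⟩ := hcon
      simp only [Set.mem_sInter, not_forall] at hx hy
      obtain ⟨q₁, hq₁, hxq₁⟩ := hx
      obtain ⟨q₂, hq₂, hyq₂⟩ := hy
      rcases hchain.total hq₁ hq₂ with h | h
      · rcases (hcS hq₁).1.2.2 x y hxy with hh | hh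
        · exact hxq₁ hh
        · exact hyq₂ (h hh)
      · rcases (hcS hq₂).1.2.2 x y hxy with hh | hh
        · exact hxq₁ (h hh)
        · exact hyq₂ hh
    · exact (Set.sInter_subset_of_mem hq0).trans (hcS hq0).2
  refine ⟨m, ⟨hmS.1, ?_⟩, hmS.2⟩
  intro q hq hqm
  have hqS : q ∈ S := ⟨hq, hqm.trans hmS.2⟩
  exact subset_antisymm hqm (hmmin hqS hqm)

/-- Every nonzero element avoids some minimal prime. -/
theorem exists_minimal_prime_not_mem {g : A} (hg : g ≠ 0) :
    ∃ p : Set A, IsMinimalPrimeLGroup p ∧ g ∉ p := by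
  have habs : absl g ≠ 0 := fun h => hg (absl_eq_zero' h)
  obtain ⟨q, hq, hqM⟩ := exists_prime_disjoint (M := {absl g})
    (by simpa using fun h => habs h.symm)
    (by simp [absl_nonneg'])
    (by simp) ⟨absl g, rfl⟩
  obtain ⟨m, hm, hmq⟩ := exists_minimal_prime_le hq
  refine ⟨m, hm, fun h => ?_⟩
  exact hqM (absl g) rfl ((hq.1.absl_mem_iff).1 (hmq h))

theorem mem_polar_singleton {x z : A} : z ∈ polar {x} ↔ absl z ⊓ absl x = 0 := by
  simp [polar]

end Aux

/-- (i) ↔ (iii) ↔ (iv) of the Conrad–Martinez characterisation: `A` is complemented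
iff there is `w` with `w^⊥⊥ = A` and every `x^⊥` is a principal polar `y^⊥⊥`,
iff for every `g` there is `f` such that for every minimal prime `p`, `g ∈ p ↔ f ∉ p`. -/
theorem statement3 {A : Type*} [Lattice A] [AddCommGroup A]
    [CovariantClass A A (· + ·) (· ≤ ·)] :
    (ComplementedLGroup A ↔
      ((∃ w : A, polar (polar {w}) = Set.univ) ∧
        ∀ x : A, ∃ y : A, polar {x} = polar (polar {y}))) ∧
    (ComplementedLGroup A ↔
      ∀ g : A, ∃ f : A, ∀ p : Set A, IsMinimalPrimeLGroup p → (g ∈ p ↔ f ∉ p)) := by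
  constructor
  · constructor
    · -- (i) → (iii)
      intro hc
      constructor
      · obtain ⟨y, -, hu⟩ := hc 0
        rw [absl_zero', sup_eq_right.2 (absl_nonneg' y)] at hu
        refine ⟨absl y, ?_⟩
        have h1 : polar {absl y} = ({0} : Set A) := by
          ext z
          rw [mem_polar_singleton, absl_of_nonneg' (absl_nonneg' y)]
          constructor
          · intro h
            have := hu.2 z (by rwa [inf_comm] at h)
            simpa using this
          · rintro rfl
            rw [absl_zero']
            exact inf_eq_left.2 (absl_nonneg' y)
        rw [h1]
        ext z
        simp only [Set.mem_univ, iff_true, polar, Set.mem_setOf_eq]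
        rintro t rfl
        rw [absl_zero']
        exact inf_eq_right.2 (absl_nonneg' z)
      · intro x
        obtain ⟨y, hdisj, hu⟩ := hc x
        refine ⟨y, ?_⟩
        ext z
        rw [mem_polar_singleton]
        constructor
        · intro hz t ht
          rw [mem_polar_singleton] at ht
          set s := absl z ⊓ absl t with hs
          have hs0 : 0 ≤ s := le_inf (absl_nonneg' z) (absl_nonneg' t)
          have hsx : s ⊓ absl x = 0 := by
            refine le_antisymm ?_ (le_inf hs0 (absl_nonneg' x))
            calc s ⊓ absl x ≤ absl z ⊓ absl x := inf_le_inf_right _ inf_le_left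
              _ = 0 := hz
          have hsy : s ⊓ absl y = 0 := by
            refine le_antisymm ?_ (le_inf hs0 (absl_nonneg' y))
            calc s ⊓ absl y ≤ absl t ⊓ absl y := inf_le_inf_right _ inf_le_right
              _ = 0 := ht
          have hsup : s ⊓ (absl x ⊔ absl y) = 0 := by
            refine le_antisymm ?_ (le_inf hs0 (le_trans (absl_nonneg' x) le_sup_left))
            calc s ⊓ (absl x ⊔ absl y) ≤ s ⊓ (absl x + absl y) := by
                  refine inf_le_inf_left s (sup_le ?_ ?_)
                  · exact le_add_of_nonneg_right (absl_nonneg' y)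
                  · exact le_add_of_nonneg_left (absl_nonneg' x)
              _ ≤ (s ⊓ absl x) + (s ⊓ absl y) :=
                  inf_add_le_riesz hs0 (absl_nonneg' x) (absl_nonneg' y)
              _ = 0 := by rw [hsx, hsy, add_zero]
          have hsup' : (absl x ⊔ absl y) ⊓ absl s = 0 := by
            rw [absl_of_nonneg' hs0, inf_comm]
            exact hsup
          exact hu.2 s hsup'
        · intro hz
          have hx : x ∈ polar {y} := mem_polar_singleton.2 hdisj
          exact hz x hx
    · -- (iii) → (i)
      rintro ⟨-, hpol⟩ x
      obtain ⟨y, hxy⟩ := hpol x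
      have hyy : y ∈ polar (polar {y}) := by
        intro t ht
        rw [mem_polar_singleton] at ht
        rw [inf_comm]
        exact ht
      have hdisj : absl x ⊓ absl y = 0 := by
        have : y ∈ polar {x} := hxy ▸ hyy
        rw [mem_polar_singleton] at this
        rw [inf_comm]
        exact this
      refine ⟨y, hdisj, le_trans (absl_nonneg' x) le_sup_left, ?_⟩
      intro g hg
      have hgx : absl g ⊓ absl x = 0 := by
        refine le_antisymm ?_ (le_inf (absl_nonneg' g) (absl_nonneg' x))
        calc absl g ⊓ absl x ≤ (absl x ⊔ absl y) ⊓ absl g := by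
              rw [inf_comm]
              exact inf_le_inf_right _ le_sup_left
          _ = 0 := hg
      have hgy : absl g ⊓ absl y = 0 := by
        refine le_antisymm ?_ (le_inf (absl_nonneg' g) (absl_nonneg' y))
        calc absl g ⊓ absl y ≤ (absl x ⊔ absl y) ⊓ absl g := by
              rw [inf_comm]
              exact inf_le_inf_right _ le_sup_right
          _ = 0 := hg
      have hgmem : g ∈ polar (polar {y}) := hxy ▸ mem_polar_singleton.2 hgx
      have := hgmem g (mem_polar_singleton.2 hgy)
      rw [inf_idem] at this
      exact absl_eq_zero' this
  · constructor
    · -- (i) → (iv)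
      intro hc g
      obtain ⟨f, hdisj, hu⟩ := hc g
      refine ⟨f, fun p hp => ?_⟩
      have hpI : IsIdeal p := hp.1.1
      have hone : g ∈ p ∨ f ∈ p := by
        rcases hp.1.2.2 _ _ hdisj with h | h
        · exact Or.inl ((hpI.absl_mem_iff).2 h)
        · exact Or.inr ((hpI.absl_mem_iff).2 h)
      have hnotboth : ¬(g ∈ p ∧ f ∈ p) := by
        rintro ⟨hg, hf⟩
        have hup : absl g ⊔ absl f ∈ p :=
          hpI.sup_mem ((hpI.absl_mem_iff).1 hg) ((hpI.absl_mem_iff).1 hf)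
        obtain ⟨h, hhp, hh⟩ := minimal_prime_polar hp hup
        rw [absl_of_nonneg' (le_trans (absl_nonneg' g) le_sup_left)] at hh
        exact hhp ((hu.2 h hh) ▸ hpI.zero_mem)
      constructor
      · intro hg hf
        exact hnotboth ⟨hg, hf⟩
      · intro hf
        rcases hone with h | h
        · exact h
        · exact absurd h hf
    · -- (iv) → (i)
      intro hiv x
      obtain ⟨f, hf⟩ := hiv x
      have hdisj : absl x ⊓ absl f = 0 := by
        by_contra hne
        obtain ⟨p, hp, hnp⟩ := exists_minimal_prime_not_mem hne
        apply hnp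
        have hpI : IsIdeal p := hp.1.1
        by_cases hx : x ∈ p
        · exact hpI.mem_of_le ((hpI.absl_mem_iff).1 hx)
            (le_inf (absl_nonneg' x) (absl_nonneg' f)) inf_le_left
        · have hfp : f ∈ p := by
            by_contra hfp
            exact hx ((hf p hp).2 hfp)
          exact hpI.mem_of_le ((hpI.absl_mem_iff).1 hfp)
            (le_inf (absl_nonneg' x) (absl_nonneg' f)) inf_le_right
      refine ⟨f, hdisj, le_trans (absl_nonneg' x) le_sup_left, ?_⟩
      intro g hg
      by_contra hgne
      obtain ⟨p, hp, hnp⟩ := exists_minimal_prime_not_mem hgne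
      have hpI : IsIdeal p := hp.1.1
      have hkey : ∀ u : A, u ≤ absl x ⊔ absl f → 0 ≤ u → u ⊓ absl g = 0 := by
        intro u hu hu0
        refine le_antisymm ?_ (le_inf hu0 (absl_nonneg' g))
        calc u ⊓ absl g ≤ (absl x ⊔ absl f) ⊓ absl g := inf_le_inf_right _ hu
          _ = 0 := hg
      have hxg : absl x ⊓ absl g = 0 := hkey _ le_sup_left (absl_nonneg' x)
      have hfg : absl f ⊓ absl g = 0 := hkey _ le_sup_right (absl_nonneg' f)
      have hxp : x ∈ p := by
        rcases hp.1.2.2 _ _ hxg with h | h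
        · exact (hpI.absl_mem_iff).2 h
        · exact absurd ((hpI.absl_mem_iff).2 h) hnp
      have hfp : f ∈ p := by
        rcases hp.1.2.2 _ _ hfg with h | h
        · exact (hpI.absl_mem_iff).2 h
        · exact absurd ((hpI.absl_mem_iff).2 h) hnp
      exact ((hf p hp).1 hxp) hfp
end

section
/- Let G be an Archimedean abelian ℓ-group with a strong unit u. If g ∈ G belongs to every maximal ideal of G, then g = 0; that is, the intersection of all maximal ideals of G is {0} (so the Yosida representation of (G,u) is injective). -/
/-- A maximal ideal: a proper ideal that is inclusion-maximal among proper ideals. -/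
def IsMaximalIdeal {A : Type*} [Lattice A] [AddCommGroup A] (m : Set A) : Prop :=
  IsIdeal m ∧ m ≠ Set.univ ∧
    ∀ I : Set A, IsIdeal I → I ≠ Set.univ → m ⊆ I → I = m

set_option linter.unusedSectionVars false

section Helpers
variable {A : Type*} [Lattice A] [AddCommGroup A] [CovariantClass A A (· + ·) (· ≤ ·)]

lemma nsmul_nonneg' {a : A} (ha : 0 ≤ a) (n : ℕ) : 0 ≤ n • a := by
  induction n with
  | zero => simp
  | succ k ih => rw [succ_nsmul]; exact add_nonneg ih ha

lemma nsmul_mono_nat {a : A} (ha : 0 ≤ a) {k m : ℕ} (h : k ≤ m) : k • a ≤ m • a := by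
  obtain ⟨d, rfl⟩ := Nat.exists_eq_add_of_le h
  rw [add_nsmul]
  exact le_add_of_nonneg_right (nsmul_nonneg' ha d)

lemma inf_add_le3 {a b c : A} (ha : 0 ≤ a) (hb : 0 ≤ b) (hc : 0 ≤ c) :
    a ⊓ (b + c) ≤ a ⊓ b + a ⊓ c := by
  have : a ⊓ b + a ⊓ c = (a + a) ⊓ (b + a) ⊓ ((a + c) ⊓ (b + c)) := by
    rw [add_inf, inf_add, inf_add]
  rw [this]
  refine le_inf (le_inf ?_ ?_) (le_inf ?_ ?_)
  · exact le_trans inf_le_left (le_add_of_nonneg_right ha)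
  · exact le_trans inf_le_left (le_add_of_nonneg_left hb)
  · exact le_trans inf_le_left (le_add_of_nonneg_right hc)
  · exact inf_le_right

lemma disjoint_nsmul' {s t : A} (hs : 0 ≤ s) (ht : 0 ≤ t) (h : s ⊓ t = 0) (k : ℕ) :
    (k • s) ⊓ t = 0 := by
  induction k with
  | zero => simp [ht]
  | succ m ih =>
      refine le_antisymm ?_ (le_inf (nsmul_nonneg' hs (m + 1)) ht)
      calc (m + 1) • s ⊓ t = t ⊓ (m • s + s) := by rw [succ_nsmul, inf_comm]
        _ ≤ t ⊓ (m • s) + t ⊓ s := inf_add_le3 ht (nsmul_nonneg' hs m) hs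
        _ = 0 := by rw [inf_comm t (m • s), ih, inf_comm, h, add_zero]

lemma neg_le_neg' {p q : A} (h : p ≤ q) : -q ≤ -p := by
  have h2 := add_le_add_left (add_le_add_right h (-q)) (-p)
  simpa [add_assoc] using h2

lemma ideal_nsmul_mem {I : Set A} (hI : IsIdeal I) {x : A} (hx : x ∈ I) (k : ℕ) : k • x ∈ I := by
  induction k with
  | zero => simpa using hI.zero_mem
  | succ m ih => rw [succ_nsmul]; exact hI.add_mem ih hx

lemma ideal_univ_of_unit_mem {I : Set A} (hI : IsIdeal I)
    (u : A) (hu0 : 0 ≤ u) (hu : ∀ g : A, ∃ n : ℕ, 1 ≤ n ∧ g ≤ n • u)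
    (huI : u ∈ I) : I = Set.univ := by
  ext x
  simp only [Set.mem_univ, iff_true]
  obtain ⟨n1, -, h1⟩ := hu x
  obtain ⟨n2, -, h2⟩ := hu (-x)
  have hx1 : x ≤ (n1 + n2) • u := h1.trans (nsmul_mono_nat hu0 (Nat.le_add_right _ _))
  have hx2 : -((n1 + n2) • u) ≤ x := by
    rw [neg_le]
    exact h2.trans (nsmul_mono_nat hu0 (Nat.le_add_left _ _))
  have hmem : (n1 + n2) • u ∈ I := ideal_nsmul_mem hI huI (n1 + n2)
  exact hI.convex (hI.neg_mem hmem) hmem hx2 hx1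

end Helpers

/-- In an Archimedean abelian ℓ-group with a strong unit, any element belonging to
every maximal ideal is zero: the intersection of all maximal ideals is `{0}`. -/
theorem statement9 {A : Type*} [Lattice A] [AddCommGroup A]
    [CovariantClass A A (· + ·) (· ≤ ·)]
    (harch : IsArch A)
    (u : A) (hu0 : 0 ≤ u) (hu : ∀ g : A, ∃ n : ℕ, 1 ≤ n ∧ g ≤ n • u)
    (g : A) (hg : ∀ m : Set A, IsMaximalIdeal m → g ∈ m) :
    g = 0 := by
  -- Work with a := |g|.
  set a : A := absl g with ha_def
  have ha0 : 0 ≤ a := add_nonneg le_sup_right le_sup_right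
  have haM : ∀ m : Set A, IsMaximalIdeal m → a ∈ m := by
    intro m hm
    have hgm := hg m hm
    have h1 : g ⊔ 0 ∈ m := hm.1.sup_mem hgm hm.1.zero_mem
    have h2 : -g ⊔ 0 ∈ m := hm.1.sup_mem (hm.1.neg_mem hgm) hm.1.zero_mem
    exact hm.1.add_mem h1 h2
  -- It suffices to show a = 0.
  have key : a = 0 := by
    apply harch a u
    intro n hn
    refine ⟨nsmul_nonneg' ha0 n, ?_⟩
    by_contra hnu
    -- y and c are the positive and negative parts of u - n • a
    set y : A := (u - n • a) ⊔ 0 with hy_def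
    set c : A := (-(u - n • a)) ⊔ 0 with hc_def
    have hy0 : 0 ≤ y := le_sup_right
    have hc0 : 0 ≤ c := le_sup_right
    have hyc : y ⊓ c = 0 := posPart_inf_negPart_eq_zero (u - n • a)
    have hcna : c ≤ n • a := by
      refine sup_le ?_ (nsmul_nonneg' ha0 n)
      rw [neg_sub]
      exact sub_le_self _ hu0
    have hcne : c ≠ 0 := by
      intro h
      apply hnu
      have : -(u - n • a) ≤ 0 := by rw [← h]; exact le_sup_left
      rw [neg_sub, sub_nonpos] at this
      exact this
    -- a is not dominated by any multiple of y
    have haky : ∀ k : ℕ, ¬ a ≤ k • y := by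
      intro k hk
      have h1 : (k • y) ⊓ c = 0 := disjoint_nsmul' hy0 hc0 hyc k
      have h2 : a ⊓ c = 0 :=
        le_antisymm (le_trans (inf_le_inf_right c hk) h1.le) (le_inf ha0 hc0)
      have h3 : (n • a) ⊓ c = 0 := disjoint_nsmul' ha0 hc0 h2 n
      apply hcne
      calc c = c ⊓ (n • a) := (inf_eq_left.2 hcna).symm
        _ = 0 := by rw [inf_comm]; exact h3
    -- The ideal generated by y
    set S : Set (Set A) := {I | IsIdeal I ∧ y ∈ I ∧ a ∉ I} with hS_def
    set J : Set A := {z | ∃ k : ℕ, z ≤ k • y ∧ -z ≤ k • y} with hJ_def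
    have hJideal : IsIdeal J := by
      constructor
      · exact ⟨0, by simp⟩
      · rintro z w ⟨k, hz1, hz2⟩ ⟨k', hw1, hw2⟩
        refine ⟨k + k', ?_, ?_⟩
        · rw [add_nsmul]; exact add_le_add hz1 hw1
        · rw [add_nsmul, neg_add]; exact add_le_add hz2 hw2
      · rintro z ⟨k, hz1, hz2⟩
        exact ⟨k, by simpa using hz2, by simpa using hz1⟩
      · rintro z w ⟨k, hz1, hz2⟩ ⟨k', hw1, hw2⟩
        refine ⟨k + k', sup_le ?_ ?_, ?_⟩
        · exact hz1.trans (nsmul_mono_nat hy0 (Nat.le_add_right _ _))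
        · exact hw1.trans (nsmul_mono_nat hy0 (Nat.le_add_left _ _))
        · rw [neg_sup]
          exact le_trans inf_le_left (hz2.trans (nsmul_mono_nat hy0 (Nat.le_add_right _ _)))
      · rintro z w ⟨k, hz1, hz2⟩ ⟨k', hw1, hw2⟩
        refine ⟨k + k', ?_, ?_⟩
        · exact le_trans inf_le_left (hz1.trans (nsmul_mono_nat hy0 (Nat.le_add_right _ _)))
        · rw [neg_inf]
          refine sup_le ?_ ?_
          · exact hz2.trans (nsmul_mono_nat hy0 (Nat.le_add_right _ _))
          · exact hw2.trans (nsmul_mono_nat hy0 (Nat.le_add_left _ _))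
      · rintro p q r ⟨k, hp1, hp2⟩ ⟨k', hr1, hr2⟩ hpq hqr
        refine ⟨k + k', ?_, ?_⟩
        · exact le_trans hqr (hr1.trans (nsmul_mono_nat hy0 (Nat.le_add_left _ _)))
        · exact le_trans (neg_le_neg' hpq) (hp2.trans (nsmul_mono_nat hy0 (Nat.le_add_right _ _)))
    have hJS : J ∈ S := by
      have hny : -y ≤ y := le_trans (by simpa using neg_le_neg' hy0) hy0
      refine ⟨hJideal, ⟨1, by simpa using le_refl y, by simpa using hny⟩, ?_⟩
      rintro ⟨k, hk1, -⟩
      exact haky k hk1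
    -- Zorn's lemma
    have hzorn : ∀ ch ⊆ S, IsChain (· ⊆ ·) ch → ch.Nonempty →
        ∃ ub ∈ S, ∀ s ∈ ch, s ⊆ ub := by
      intro ch hchS hch hchne
      obtain ⟨I0, hI0⟩ := hchne
      refine ⟨⋃₀ ch, ⟨?_, ?_, ?_⟩, fun s hs => Set.subset_sUnion_of_mem hs⟩
      · constructor
        · exact ⟨I0, hI0, (hchS hI0).1.zero_mem⟩
        · rintro z w ⟨I1, hI1, hz⟩ ⟨I2, hI2, hw⟩
          rcases hch.total hI1 hI2 with h | h
          · exact ⟨I2, hI2, (hchS hI2).1.add_mem (h hz) hw⟩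
          · exact ⟨I1, hI1, (hchS hI1).1.add_mem hz (h hw)⟩
        · rintro z ⟨I1, hI1, hz⟩
          exact ⟨I1, hI1, (hchS hI1).1.neg_mem hz⟩
        · rintro z w ⟨I1, hI1, hz⟩ ⟨I2, hI2, hw⟩
          rcases hch.total hI1 hI2 with h | h
          · exact ⟨I2, hI2, (hchS hI2).1.sup_mem (h hz) hw⟩
          · exact ⟨I1, hI1, (hchS hI1).1.sup_mem hz (h hw)⟩
        · rintro z w ⟨I1, hI1, hz⟩ ⟨I2, hI2, hw⟩
          rcases hch.total hI1 hI2 with h | h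
          · exact ⟨I2, hI2, (hchS hI2).1.inf_mem (h hz) hw⟩
          · exact ⟨I1, hI1, (hchS hI1).1.inf_mem hz (h hw)⟩
        · rintro p q r ⟨I1, hI1, hp⟩ ⟨I2, hI2, hr⟩ hpq hqr
          rcases hch.total hI1 hI2 with h | h
          · exact ⟨I2, hI2, (hchS hI2).1.convex (h hp) hr hpq hqr⟩
          · exact ⟨I1, hI1, (hchS hI1).1.convex hp (h hr) hpq hqr⟩
      · exact ⟨I0, hI0, (hchS hI0).2.1⟩
      · rintro ⟨I1, hI1, haI1⟩
        exact (hchS hI1).2.2 haI1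
    obtain ⟨M, hJM, hMS⟩ := zorn_subset_nonempty S hzorn J hJS
    -- M is a maximal ideal
    obtain ⟨hMideal, hyM, haMnot⟩ := hMS.1
    have hMmaximal : IsMaximalIdeal M := by
      refine ⟨hMideal, ?_, ?_⟩
      · intro h
        exact haMnot (h ▸ Set.mem_univ a)
      · intro I hI hIne hMI
        by_contra hne
        have haI : a ∈ I := by
          by_contra haI
          exact hne (Set.Subset.antisymm (hMS.2 ⟨hI, hMI hyM, haI⟩ hMI) hMI)
        -- then u ∈ I, so I = univ, contradiction
        have hnaI : n • a ∈ I := ideal_nsmul_mem hI haI n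
        have hinfI : (n • a) ⊓ u ∈ I :=
          hI.convex hI.zero_mem hnaI (le_inf (nsmul_nonneg' ha0 n) hu0) inf_le_left
        have hyI : y ∈ I := hMI hyM
        have huI : u ∈ I := by
          have h0 : y = u - (n • a) ⊓ u := by
            rw [hy_def, sub_inf, sub_self]
          have : y + (n • a) ⊓ u = u := by rw [h0]; abel
          rw [← this]
          exact hI.add_mem hyI hinfI
        exact hIne (ideal_univ_of_unit_mem hI u hu0 hu huI)
    exact haMnot (haM M hMmaximal)
  -- from |g| = 0 deduce g = 0
  have hp : g ⊔ 0 = 0 := by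
    have h1 : g ⊔ 0 ≤ a := by
      rw [ha_def, absl]
      exact le_add_of_nonneg_right le_sup_right
    exact le_antisymm (key ▸ h1) le_sup_right
  have hq : -g ⊔ 0 = 0 := by
    have h1 : -g ⊔ 0 ≤ a := by
      rw [ha_def, absl]
      exact le_add_of_nonneg_left le_sup_right
    exact le_antisymm (key ▸ h1) le_sup_right
  have hg1 : g ≤ 0 := le_sup_left.trans hp.le
  have hg2 : -g ≤ 0 := le_sup_left.trans hq.le
  exact le_antisymm hg1 (by simpa using hg2)
end

section
/- Let X be a compact Hausdorff topological space and let G be a unital ℓ-subgroup of C(X,ℝ), i.e., an additive subgroup of the continuous real-valued functions on X that is closed under pointwise ⊓ and ⊔ and contains the constant function 1. Let g ∈ G and let χ ∈ G be a component of the unit 1 (equivalently, a continuous function with values in {0,1}). Then the pointwise product g·χ belongs to G. -/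
/-- If `G` is a unital ℓ-subgroup of `C(X, ℝ)` for `X` compact Hausdorff, `g ∈ G`,
and `χ ∈ G` is a component of the unit `1`, then the pointwise product `g * χ`
belongs to `G`. -/
theorem statement14 {X : Type*} [TopologicalSpace X] [CompactSpace X] [T2Space X]
    (G : Set C(X, ℝ))
    (hone : (1 : C(X, ℝ)) ∈ G)
    (hadd : ∀ f g : C(X, ℝ), f ∈ G → g ∈ G → f + g ∈ G)
    (hneg : ∀ f : C(X, ℝ), f ∈ G → -f ∈ G)
    (hinf : ∀ f g : C(X, ℝ), f ∈ G → g ∈ G → f ⊓ g ∈ G)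
    (hsup : ∀ f g : C(X, ℝ), f ∈ G → g ∈ G → f ⊔ g ∈ G)
    (g χ : C(X, ℝ)) (hg : g ∈ G) (hχ : χ ∈ G)
    (hcomp : χ ⊓ (1 - χ) = 0 ∧ χ ⊔ (1 - χ) = 1) :
    g * χ ∈ G := by
  -- χ is {0,1}-valued
  have hval : ∀ x, χ x = 0 ∨ χ x = 1 := by
    intro x
    have h := congrArg (fun f : C(X, ℝ) => f x) hcomp.1
    simp only [ContinuousMap.inf_apply, ContinuousMap.sub_apply, ContinuousMap.one_apply,
      ContinuousMap.zero_apply] at h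
    rcases le_total (χ x) (1 - χ x) with hle | hle
    · left; rw [min_eq_left hle] at h; exact h
    · right; rw [min_eq_right hle] at h; linarith
  -- closure under ℕ-smul
  have hnsmul : ∀ (n : ℕ) (f : C(X, ℝ)), f ∈ G → (n • f) ∈ G := by
    intro n f hf
    induction n with
    | zero => simpa using hadd f (-f) hf (hneg f hf)
    | succ k ih => rw [succ_nsmul]; exact hadd _ _ ih hf
  -- bound on g
  obtain ⟨n, hn⟩ : ∃ n : ℕ, ∀ x, |g x| ≤ n := by
    refine ⟨⌈‖g‖⌉₊, fun x => ?_⟩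
    calc |g x| = ‖g x‖ := rfl
      _ ≤ ‖g‖ := g.norm_coe_le_norm x
      _ ≤ ⌈‖g‖⌉₊ := Nat.le_ceil _
  have key : g * χ = (g ⊓ n • χ) ⊔ (-(n • χ)) := by
    ext x
    have hb := hn x
    have habs₁ : g x ≤ n := (abs_le.1 hb).2
    have habs₂ : -(n : ℝ) ≤ g x := (abs_le.1 hb).1
    simp only [ContinuousMap.mul_apply, ContinuousMap.sup_apply, ContinuousMap.inf_apply,
      ContinuousMap.neg_apply, ContinuousMap.smul_apply, smul_eq_mul]
    rcases hval x with h0 | h1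
    · rw [h0]
      simp [max_eq_right (min_le_right (g x) 0)]
    · rw [h1]
      simp only [mul_one, nsmul_eq_mul]
      rw [min_eq_left habs₁, max_eq_left (by linarith)]
  rw [key]
  exact hsup _ _ (hinf _ _ hg (hnsmul n χ hχ)) (hneg _ (hnsmul n χ hχ))
end

section
/- Let Y be a compact Hausdorff topological space, let H be a unital ℓ-subgroup of C(Y,ℝ), and let E be the smallest ℓ-subgroup of C(Y,ℝ) containing H together with every continuous {0,1}-valued function on Y. Then for e ∈ C(Y,ℝ) the following are equivalent: (1) e ∈ E; (2) there exist finitely many pairwise disjoint clopen subsets D₁, …, D_l of Y whose union is Y, and elements a₁, …, a_l ∈ H, such that e = Σᵢ aᵢ·χ_{Dᵢ}, where χ_{Dᵢ} is the characteristic function of Dᵢ and aᵢ·χ_{Dᵢ} is the pointwise product (so e agrees with aᵢ on each Dᵢ). -/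
/-- The carrier of an ℓ-subgroup of `C(Y, ℝ)`: an additive subgroup closed under
pointwise `⊓` and `⊔`. -/
def IsLSubgroup {Y : Type*} [TopologicalSpace Y] (S : Set C(Y, ℝ)) : Prop :=
  (0 : C(Y, ℝ)) ∈ S ∧
  (∀ f g : C(Y, ℝ), f ∈ S → g ∈ S → f + g ∈ S) ∧
  (∀ f : C(Y, ℝ), f ∈ S → -f ∈ S) ∧
  (∀ f g : C(Y, ℝ), f ∈ S → g ∈ S → f ⊓ g ∈ S) ∧
  (∀ f g : C(Y, ℝ), f ∈ S → g ∈ S → f ⊔ g ∈ S)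

/-- The smallest ℓ-subgroup of `C(Y, ℝ)` containing `H` together with every
continuous `{0,1}`-valued function on `Y`. -/
def genE {Y : Type*} [TopologicalSpace Y] (H : Set C(Y, ℝ)) : Set C(Y, ℝ) :=
  ⋂₀ {S : Set C(Y, ℝ) | IsLSubgroup S ∧ H ⊆ S ∧
      ∀ f : C(Y, ℝ), (∀ y : Y, f y = 0 ∨ f y = 1) → f ∈ S}

namespace Statement15Aux

variable {Y : Type*} [TopologicalSpace Y]

/-- The representation predicate from the RHS of the theorem. -/
def Rep (H : Set C(Y, ℝ)) (e : C(Y, ℝ)) : Prop :=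
  ∃ (l : ℕ) (D : Fin l → Set Y) (a : Fin l → C(Y, ℝ)),
    (∀ i, IsClopen (D i)) ∧
    (∀ i j, i ≠ j → Disjoint (D i) (D j)) ∧
    (⋃ i, D i) = Set.univ ∧
    (∀ i, a i ∈ H) ∧
    ∀ y : Y, e y = ∑ i, (D i).indicator (⇑(a i)) y

lemma sum_indicator_eq {l : ℕ} {D : Fin l → Set Y}
    (hdisj : ∀ i j, i ≠ j → Disjoint (D i) (D j)) (a : Fin l → C(Y, ℝ))
    {i : Fin l} {y : Y} (hy : y ∈ D i) :
    ∑ j, (D j).indicator (⇑(a j)) y = a i y := by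
  rw [Finset.sum_eq_single_of_mem i (Finset.mem_univ i)]
  · exact Set.indicator_of_mem hy _
  · intro j _ hj
    exact Set.indicator_of_notMem
      (fun hyj => (Set.disjoint_left.mp (hdisj j i hj)) hyj hy) _

lemma rep_of_agree {H : Set C(Y, ℝ)} {e : C(Y, ℝ)} (l : ℕ) (D : Fin l → Set Y)
    (a : Fin l → C(Y, ℝ)) (hcl : ∀ i, IsClopen (D i))
    (hdisj : ∀ i j, i ≠ j → Disjoint (D i) (D j))
    (hcov : (⋃ i, D i) = Set.univ) (ha : ∀ i, a i ∈ H)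
    (h : ∀ i, ∀ y ∈ D i, e y = a i y) : Rep H e := by
  refine ⟨l, D, a, hcl, hdisj, hcov, ha, fun y => ?_⟩
  obtain ⟨i, hi⟩ : ∃ i, y ∈ D i := by
    simpa using (hcov ▸ Set.mem_univ y : y ∈ ⋃ i, D i)
  rw [sum_indicator_eq hdisj a hi]
  exact h i y hi

lemma agree_of_rep {l : ℕ} {D : Fin l → Set Y} {a : Fin l → C(Y, ℝ)} {e : C(Y, ℝ)}
    (hdisj : ∀ i j, i ≠ j → Disjoint (D i) (D j))
    (h : ∀ y : Y, e y = ∑ i, (D i).indicator (⇑(a i)) y) :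
    ∀ i, ∀ y ∈ D i, e y = a i y :=
  fun i y hy => (h y).trans (sum_indicator_eq hdisj a hy)

lemma rep_mem {H : Set C(Y, ℝ)} {f : C(Y, ℝ)} (hf : f ∈ H) : Rep H f := by
  refine rep_of_agree 1 (fun _ => Set.univ) (fun _ => f)
    (fun _ => isClopen_univ) (fun i j hij => absurd (Subsingleton.elim i j) hij)
    (by simp [Set.iUnion_const]) (fun _ => hf) (fun _ _ _ => rfl)

lemma rep_binop {H : Set C(Y, ℝ)} (op : C(Y, ℝ) → C(Y, ℝ) → C(Y, ℝ))
    (hop : ∀ f g, f ∈ H → g ∈ H → op f g ∈ H)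
    (hptw : ∀ (f g f' g' : C(Y, ℝ)) (y : Y),
      f y = f' y → g y = g' y → op f g y = op f' g' y)
    {e e' : C(Y, ℝ)} (he : Rep H e) (he' : Rep H e') : Rep H (op e e') := by
  obtain ⟨l, D, a, hcl, hdisj, hcov, ha, h⟩ := he
  obtain ⟨m, E, b, hcl', hdisj', hcov', hb, h'⟩ := he'
  set q : Fin l × Fin m ≃ Fin (l * m) := finProdFinEquiv
  refine rep_of_agree (l * m)
    (fun k => D (q.symm k).1 ∩ E (q.symm k).2)
    (fun k => op (a (q.symm k).1) (b (q.symm k).2))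
    (fun k => (hcl _).inter (hcl' _)) ?_ ?_
    (fun k => hop _ _ (ha _) (hb _)) ?_
  · intro k k' hkk'
    have hne : q.symm k ≠ q.symm k' := fun hc => hkk' (q.symm.injective hc)
    by_cases h1 : (q.symm k).1 = (q.symm k').1
    · have h2 : (q.symm k).2 ≠ (q.symm k').2 := by
        intro h2; exact hne (Prod.ext h1 h2)
      exact Disjoint.mono Set.inter_subset_right Set.inter_subset_right
        (hdisj' _ _ h2)
    · exact Disjoint.mono Set.inter_subset_left Set.inter_subset_left
        (hdisj _ _ h1)
  · apply Set.eq_univ_of_forall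
    intro y
    obtain ⟨i, hi⟩ : ∃ i, y ∈ D i := by
      simpa using (hcov ▸ Set.mem_univ y : y ∈ ⋃ i, D i)
    obtain ⟨j, hj⟩ : ∃ j, y ∈ E j := by
      simpa using (hcov' ▸ Set.mem_univ y : y ∈ ⋃ j, E j)
    exact Set.mem_iUnion.mpr ⟨q (i, j), by simp [q, hi, hj]⟩
  · intro k y hy
    exact hptw _ _ _ _ y
      (agree_of_rep hdisj h _ y hy.1)
      (agree_of_rep hdisj' h' _ y hy.2)

lemma rep_neg {H : Set C(Y, ℝ)} (hneg : ∀ f : C(Y, ℝ), f ∈ H → -f ∈ H)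
    {e : C(Y, ℝ)} (he : Rep H e) : Rep H (-e) := by
  obtain ⟨l, D, a, hcl, hdisj, hcov, ha, h⟩ := he
  refine rep_of_agree l D (fun i => -(a i)) hcl hdisj hcov (fun i => hneg _ (ha i))
    (fun i y hy => ?_)
  simp [agree_of_rep hdisj h i y hy]

lemma rep_char {H : Set C(Y, ℝ)} (hzero : (0 : C(Y, ℝ)) ∈ H)
    (hone : (1 : C(Y, ℝ)) ∈ H) (f : C(Y, ℝ)) (hf : ∀ y : Y, f y = 0 ∨ f y = 1) :
    Rep H f := by
  have hopen1 : IsOpen (f ⁻¹' {1}) := by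
    have : f ⁻¹' {1} = f ⁻¹' (Set.Ioi (1/2 : ℝ)) := by
      ext y
      simp only [Set.mem_preimage, Set.mem_singleton_iff, Set.mem_Ioi]
      constructor
      · intro h; rw [h]; norm_num
      · intro h; rcases hf y with h0 | h1
        · rw [h0] at h; norm_num at h
        · exact h1
    rw [this]; exact (isOpen_Ioi).preimage f.continuous
  have hopen0 : IsOpen (f ⁻¹' {0}) := by
    have : f ⁻¹' {0} = f ⁻¹' (Set.Iio (1/2 : ℝ)) := by
      ext y
      simp only [Set.mem_preimage, Set.mem_singleton_iff, Set.mem_Iio]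
      constructor
      · intro h; rw [h]; norm_num
      · intro h; rcases hf y with h0 | h1
        · exact h0
        · rw [h1] at h; norm_num at h
    rw [this]; exact (isOpen_Iio).preimage f.continuous
  refine rep_of_agree 2 ![f ⁻¹' {1}, f ⁻¹' {0}] ![1, 0] ?_ ?_ ?_ ?_ ?_
  · intro i
    fin_cases i
    · exact ⟨(isClosed_singleton).preimage f.continuous, hopen1⟩
    · exact ⟨(isClosed_singleton).preimage f.continuous, hopen0⟩
  · intro i j hij
    fin_cases i <;> fin_cases j <;> simp_all <;>
      · rw [Set.disjoint_left]
        intro y hy hy'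
        simp only [Set.mem_preimage, Set.mem_singleton_iff] at hy hy'
        rw [hy] at hy'; norm_num at hy'
  · apply Set.eq_univ_of_forall
    intro y
    rcases hf y with h0 | h1
    · exact Set.mem_iUnion.mpr ⟨1, by simpa using h0⟩
    · exact Set.mem_iUnion.mpr ⟨0, by simpa using h1⟩
  · intro i; fin_cases i <;> simp [hone, hzero]
  · intro i
    fin_cases i <;> intro y hy <;>
      simpa using hy

end Statement15Aux

open Statement15Aux in
/-- For `Y` compact Hausdorff and `H` a unital ℓ-subgroup of `C(Y, ℝ)`, a function
`e` lies in the ℓ-subgroup generated by `H` and all characteristic functions iff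
there is a finite clopen partition `D₁, …, D_l` of `Y` and elements `aᵢ ∈ H`
with `e = Σᵢ aᵢ·χ_{Dᵢ}` (so `e` agrees with `aᵢ` on each `Dᵢ`). -/
theorem statement15 {Y : Type*} [TopologicalSpace Y] [CompactSpace Y] [T2Space Y]
    (H : Set C(Y, ℝ)) (hH : IsLSubgroup H) (hone : (1 : C(Y, ℝ)) ∈ H)
    (e : C(Y, ℝ)) :
    e ∈ genE H ↔
      ∃ (l : ℕ) (D : Fin l → Set Y) (a : Fin l → C(Y, ℝ)),
        (∀ i, IsClopen (D i)) ∧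
        (∀ i j, i ≠ j → Disjoint (D i) (D j)) ∧
        (⋃ i, D i) = Set.univ ∧
        (∀ i, a i ∈ H) ∧
        ∀ y : Y, e y = ∑ i, (D i).indicator (⇑(a i)) y := by
  obtain ⟨hz, hadd, hneg, hinf, hsup⟩ := hH
  constructor
  · -- genE ⊆ Rep
    intro he
    have hmem : {g : C(Y, ℝ) | Rep H g} ∈
        {S : Set C(Y, ℝ) | IsLSubgroup S ∧ H ⊆ S ∧
          ∀ f : C(Y, ℝ), (∀ y : Y, f y = 0 ∨ f y = 1) → f ∈ S} := by
      refine ⟨⟨rep_mem hz,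
        fun f g hf hg => rep_binop (· + ·) hadd
          (fun f g f' g' y h1 h2 => by simp [h1, h2]) hf hg,
        fun f hf => rep_neg hneg hf,
        fun f g hf hg => rep_binop (· ⊓ ·) hinf
          (fun f g f' g' y h1 h2 => by
            simp [ContinuousMap.inf_apply, h1, h2]) hf hg,
        fun f g hf hg => rep_binop (· ⊔ ·) hsup
          (fun f g f' g' y h1 h2 => by
            simp [ContinuousMap.sup_apply, h1, h2]) hf hg⟩,
        fun f hf => rep_mem hf,
        fun f hf => rep_char hz hone f hf⟩
    exact he _ hmem
  · -- Rep ⊆ genE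
    rintro ⟨l, D, a, hcl, hdisj, hcov, ha, h⟩
    intro S hS
    obtain ⟨⟨hz', hadd', hneg', hinf', hsup'⟩, hHS, hchar⟩ := hS
    -- the indicator of a clopen set as a continuous map
    have key : ∀ i : Fin l, ∃ g : C(Y, ℝ), g ∈ S ∧
        ∀ y : Y, g y = (D i).indicator (⇑(a i)) y := by
      intro i
      set χ : C(Y, ℝ) := ⟨(D i).indicator 1,
        continuous_indicator (by simp [hcl i]) continuous_const.continuousOn⟩ with hχ
      have hχS : χ ∈ S := by
        apply hchar
        intro y
        by_cases hy : y ∈ D i <;> simp [χ, hy]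
      obtain ⟨n, hn⟩ := exists_nat_ge ‖a i‖
      have hbound : ∀ y : Y, |a i y| ≤ (n : ℝ) := fun y =>
        le_trans (by simpa using (a i).norm_coe_le_norm y) hn
      have hsmul : ∀ m : ℕ, (m • χ : C(Y, ℝ)) ∈ S := by
        intro m
        induction m with
        | zero => simpa using hz'
        | succ k ih =>
          rw [succ_nsmul]
          exact hadd' _ _ ih hχS
      have hnχ : (n : ℕ) • χ ∈ S := hsmul n
      refine ⟨(a i ⊓ (n • χ)) ⊔ (-(n • χ)), hsup' _ _ (hinf' _ _ (hHS (ha i)) hnχ) (hneg' _ hnχ), ?_⟩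
      intro y
      by_cases hy : y ∈ D i
      · have hχy : χ y = 1 := by simp [χ, hy]
        have h1 : |a i y| ≤ (n : ℝ) := hbound y
        rw [Set.indicator_of_mem hy]
        have hval : ((n : ℕ) • χ) y = (n : ℝ) := by simp [hχy]
        simp only [ContinuousMap.sup_apply, ContinuousMap.inf_apply,
          ContinuousMap.neg_apply, hval]
        rw [inf_eq_left.mpr (abs_le.mp h1).2, sup_eq_left.mpr (abs_le.mp h1).1]
      · have hχy : χ y = 0 := by simp [χ, hy]
        rw [Set.indicator_of_notMem hy]
        have hval : ((n : ℕ) • χ) y = (0 : ℝ) := by simp [hχy]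
        simp only [ContinuousMap.sup_apply, ContinuousMap.inf_apply,
          ContinuousMap.neg_apply, hval, neg_zero]
        exact sup_eq_right.mpr inf_le_right
    choose g hgS hg using key
    have heq : e = ∑ i, g i := by
      ext y
      rw [h y, ContinuousMap.sum_apply]
      exact Finset.sum_congr rfl (fun i _ => (hg i y).symm)
    rw [heq]
    refine Finset.sum_induction g (· ∈ S) hadd' hz' (fun i _ => hgS i)
end
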